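/- arXiv:2601.04193 — 4 statements merged into one kernel-verified Lean document; each statement's English description precedes it below -/
import Mathlib

section
/- Let G be a finite directed graph, q ≥ 1, and f0, f1 probability distributions on V. For any continuous v : [0,1] → (E → ℝ) and any continuous path g : [0,1] → (E → ℝ) of probability distributions on E satisfying Σ_{k∈E} ω_{x,k} ∫_0^1 v(t)_k g(t)_k dt = f1(x) − f0(x) for all x ∈ V, one has I_q(v, g) ≥ (1/2) Σ_{x∈V} |f1(x) − f0(x)|. Consequently V_q(f0, f1) ≥ TV(f0, f1), the total variation distance. -/
open scoped BigOperators
open Set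

/-- A probability distribution on a finite set. -/
def IsProbDist {S : Type*} [Fintype S] (f : S → ℝ) : Prop :=
  (∀ s, 0 ≤ f s) ∧ ∑ s, f s = 1

/-- A coupling of two distributions on a finite set. -/
def IsCoupling {V : Type*} [Fintype V] (f0 f1 : V → ℝ) (π : V → V → ℝ) : Prop :=
  (∀ x y, 0 ≤ π x y) ∧ (∀ x, ∑ y, π x y = f0 x) ∧ (∀ y, ∑ x, π x y = f1 y)

/-- Wasserstein-1 distance w.r.t. the shortest-path distance of a graph. -/
noncomputable def W1 {V : Type*} [Fintype V] (T : SimpleGraph V) (f0 f1 : V → ℝ) : ℝ :=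
  sInf {c : ℝ | ∃ π : V → V → ℝ, IsCoupling f0 f1 π ∧
    c = ∑ x, ∑ y, (T.dist x y : ℝ) * π x y}

/-- The tail of `f` past `x` in a tree rooted at `r`: the sum of `f y` over the
vertices `y` such that the unique path from `r` to `y` passes through `x`
(equivalently, `dist r x + dist x y = dist r y`). -/
noncomputable def tailSum {V : Type*} [Fintype V] (T : SimpleGraph V) (r : V)
    (f : V → ℝ) (x : V) : ℝ :=
  ∑ y, if T.dist r x + T.dist x y = T.dist r y then f y else 0

/-- The energy functional `I_q`. -/
noncomputable def Iq {E : Type*} [Fintype E] (q : ℝ) (v g : ℝ → E → ℝ) : ℝ :=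
  (∫ t in (0:ℝ)..1, ∑ k, g t k * |v t k| ^ q) ^ (1 / q)

/-- A finite directed graph on vertex type `V` with edge type `E`. -/
structure DiGraph (V E : Type*) where
  tail : E → V
  head : E → V
  ne : ∀ k, tail k ≠ head k

namespace DiGraph

variable {V E : Type*}

/-- The signed incidence matrix. -/
def incidence [DecidableEq V] (G : DiGraph V E) (x : V) (k : E) : ℝ :=
  if G.head k = x then 1 else if G.tail k = x then -1 else 0

/-- The underlying undirected simple graph. -/
def toSimpleGraph (G : DiGraph V E) : SimpleGraph V where
  Adj x y := x ≠ y ∧ ∃ k, (G.tail k = x ∧ G.head k = y) ∨ (G.tail k = y ∧ G.head k = x)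
  symm := ⟨by rintro x y ⟨hne, k, h⟩; exact ⟨hne.symm, k, h.symm⟩⟩
  loopless := ⟨by rintro x ⟨hne, -⟩; exact hne rfl⟩

/-- `G` is a rooted tree with root `r`: the underlying graph is a tree, and every
edge is oriented away from the root. -/
def IsRootedTree (G : DiGraph V E) (r : V) : Prop :=
  G.toSimpleGraph.IsTree ∧
  ∀ k, G.toSimpleGraph.dist r (G.head k) = G.toSimpleGraph.dist r (G.tail k) + 1

end DiGraph

/-- A solution `(f, v, g)` of the discrete transport equation on `[0,1]`. -/
structure TransportSolution {V E : Type*} [Fintype V] [Fintype E] [DecidableEq V]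
    (G : DiGraph V E) where
  f : ℝ → V → ℝ
  v : ℝ → E → ℝ
  g : ℝ → E → ℝ
  f_prob : ∀ t ∈ Icc (0:ℝ) 1, IsProbDist (f t)
  g_prob : ∀ t ∈ Icc (0:ℝ) 1, IsProbDist (g t)
  v_cont : ContinuousOn (fun t => v t) (Icc (0:ℝ) 1)
  g_cont : ContinuousOn (fun t => g t) (Icc (0:ℝ) 1)
  transport : ∀ x : V, ∀ t ∈ Icc (0:ℝ) 1,
    HasDerivWithinAt (fun s => f s x) (∑ k, G.incidence x k * v t k * g t k) (Icc (0:ℝ) 1) t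

/-- `I_q ≥ TV` for any admissible pair, hence `V_q ≥ TV`. -/
theorem statement14 {V E : Type*} [Fintype V] [Fintype E] [DecidableEq V]
    (G : DiGraph V E) (q : ℝ) (hq : 1 ≤ q)
    (f0 f1 : V → ℝ) (h0 : IsProbDist f0) (h1 : IsProbDist f1) :
    (∀ v g : ℝ → E → ℝ,
      ContinuousOn (fun t => v t) (Icc (0:ℝ) 1) →
      ContinuousOn (fun t => g t) (Icc (0:ℝ) 1) →
      (∀ t ∈ Icc (0:ℝ) 1, IsProbDist (g t)) →
      (∀ x : V, ∑ k, G.incidence x k * (∫ t in (0:ℝ)..1, v t k * g t k)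
        = f1 x - f0 x) →
      (1 / 2) * ∑ x, |f1 x - f0 x| ≤ Iq q v g) ∧
    (1 / 2) * ∑ x, |f1 x - f0 x| ∈
      lowerBounds {c : ℝ | ∃ v g : ℝ → E → ℝ,
        ContinuousOn (fun t => v t) (Icc (0:ℝ) 1) ∧
        ContinuousOn (fun t => g t) (Icc (0:ℝ) 1) ∧
        (∀ t ∈ Icc (0:ℝ) 1, IsProbDist (g t)) ∧
        (∀ x : V, ∑ k, G.incidence x k * (∫ t in (0:ℝ)..1, v t k * g t k)
          = f1 x - f0 x) ∧
        c = Iq q v g} := by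
  have main : ∀ v g : ℝ → E → ℝ,
      ContinuousOn (fun t => v t) (Icc (0:ℝ) 1) →
      ContinuousOn (fun t => g t) (Icc (0:ℝ) 1) →
      (∀ t ∈ Icc (0:ℝ) 1, IsProbDist (g t)) →
      (∀ x : V, ∑ k, G.incidence x k * (∫ t in (0:ℝ)..1, v t k * g t k)
        = f1 x - f0 x) →
      (1 / 2) * ∑ x, |f1 x - f0 x| ≤ Iq q v g := by
    intro v g hv hg hgprob htrans
    classical
    have hq0 : 0 < q := lt_of_lt_of_le one_pos hq
    set c : E → ℝ := fun k => ∫ t in (0:ℝ)..1, v t k * g t k with hc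
    set A : ℝ → ℝ := fun t => ∑ k, g t k * |v t k| with hA
    set B : ℝ → ℝ := fun t => ∑ k, g t k * |v t k| ^ q with hB
    -- componentwise continuity
    have hvk : ∀ k, ContinuousOn (fun t => v t k) (Icc (0:ℝ) 1) :=
      fun k => (continuous_apply k).comp_continuousOn hv
    have hgk : ∀ k, ContinuousOn (fun t => g t k) (Icc (0:ℝ) 1) :=
      fun k => (continuous_apply k).comp_continuousOn hg
    have hAcont : ContinuousOn A (Icc (0:ℝ) 1) := by
      apply continuousOn_finset_sum
      intro k _
      exact (hgk k).mul (hvk k).abs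
    have hBcont : ContinuousOn B (Icc (0:ℝ) 1) := by
      apply continuousOn_finset_sum
      intro k _
      exact (hgk k).mul <| (hvk k).abs.rpow_const (fun t _ => Or.inr hq0.le)
    have huIcc : uIcc (0:ℝ) 1 = Icc 0 1 := uIcc_of_le zero_le_one
    have hIntA : IntervalIntegrable A MeasureTheory.volume 0 1 := by
      apply ContinuousOn.intervalIntegrable; rwa [huIcc]
    have hIntB : IntervalIntegrable B MeasureTheory.volume 0 1 := by
      apply ContinuousOn.intervalIntegrable; rwa [huIcc]
    have hBqcont : ContinuousOn (fun t => B t ^ (1/q)) (Icc (0:ℝ) 1) :=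
      hBcont.rpow_const (fun t _ => Or.inr (by positivity))
    have hIntBq : IntervalIntegrable (fun t => B t ^ (1/q)) MeasureTheory.volume 0 1 := by
      apply ContinuousOn.intervalIntegrable; rwa [huIcc]
    have hIntgv : ∀ k, IntervalIntegrable (fun t => g t k * |v t k|)
        MeasureTheory.volume 0 1 := by
      intro k
      apply ContinuousOn.intervalIntegrable; rw [huIcc]; exact (hgk k).mul (hvk k).abs
    -- Step 1: ∑_x |δf x| ≤ 2 ∑_k |c k|
    have hinc : ∀ k, ∑ x, |G.incidence x k| = 2 := by
      intro k
      calc ∑ x, |G.incidence x k|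
          = ∑ x, ((if G.head k = x then (1:ℝ) else 0) + (if G.tail k = x then 1 else 0)) := by
            refine Finset.sum_congr rfl fun x _ => ?_
            simp only [DiGraph.incidence]
            by_cases h1 : G.head k = x
            · have h2 : ¬ G.tail k = x := fun h => G.ne k (h.trans h1.symm)
              simp [h1, h2]
            · by_cases h2 : G.tail k = x <;> simp [h1, h2]
        _ = 2 := by
            rw [Finset.sum_add_distrib, Finset.sum_ite_eq, Finset.sum_ite_eq]
            simp; norm_num
    have step1 : ∑ x, |f1 x - f0 x| ≤ 2 * ∑ k, |c k| := by
      calc ∑ x, |f1 x - f0 x| = ∑ x, |∑ k, G.incidence x k * c k| := by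
            refine Finset.sum_congr rfl fun x _ => ?_
            rw [htrans x]
        _ ≤ ∑ x, ∑ k, |G.incidence x k| * |c k| := by
            refine Finset.sum_le_sum fun x _ => ?_
            refine (Finset.abs_sum_le_sum_abs _ _).trans ?_
            refine le_of_eq (Finset.sum_congr rfl fun k _ => abs_mul _ _)
        _ = ∑ k, (∑ x, |G.incidence x k|) * |c k| := by
            rw [Finset.sum_comm]
            exact Finset.sum_congr rfl fun k _ => (Finset.sum_mul _ _ _).symm
        _ = ∑ k, 2 * |c k| := by
            refine Finset.sum_congr rfl fun k _ => ?_
            rw [hinc k]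
        _ = 2 * ∑ k, |c k| := (Finset.mul_sum _ _ _).symm
    -- Step 2: |c k| ≤ ∫ g |v|
    have step2 : ∀ k, |c k| ≤ ∫ t in (0:ℝ)..1, g t k * |v t k| := by
      intro k
      refine (intervalIntegral.abs_integral_le_integral_abs zero_le_one).trans ?_
      refine le_of_eq (intervalIntegral.integral_congr ?_)
      intro t ht
      rw [huIcc] at ht
      have hg0 := (hgprob t ht).1 k
      simp only []
      rw [abs_mul, abs_of_nonneg hg0, mul_comm]
    -- Step 3: pointwise A ≤ B ^ (1/q)
    have step3 : ∀ t ∈ Icc (0:ℝ) 1, A t ≤ B t ^ (1/q) := by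
      intro t ht
      have hgp := hgprob t ht
      have := Real.inner_le_weight_mul_Lp_of_nonneg Finset.univ hq (g t)
        (fun k => |v t k|) hgp.1 (fun k => abs_nonneg _)
      rw [hgp.2, Real.one_rpow, one_mul] at this
      simpa [hA, hB, one_div] using this
    -- Step 4: Jensen
    have hμ : MeasureTheory.IsProbabilityMeasure
        (MeasureTheory.volume.restrict (Ioc (0:ℝ) 1)) := by
      constructor
      rw [MeasureTheory.Measure.restrict_apply_univ, Real.volume_Ioc]
      norm_num
    have step4 : (∫ t in (0:ℝ)..1, B t ^ (1/q)) ≤ (∫ t in (0:ℝ)..1, B t) ^ (1/q) := by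
      rw [intervalIntegral.integral_of_le zero_le_one,
        intervalIntegral.integral_of_le zero_le_one]
      have hconc : ConcaveOn ℝ (Ici (0:ℝ)) (fun x : ℝ => x ^ (1/q)) :=
        Real.concaveOn_rpow (by positivity) (by
          rw [div_le_one hq0]; exact hq)
      have hcont : ContinuousOn (fun x : ℝ => x ^ (1/q)) (Ici 0) :=
        (continuous_id.rpow_const (fun x => Or.inr (by positivity))).continuousOn
      have hmem : ∀ᵐ t ∂(MeasureTheory.volume.restrict (Ioc (0:ℝ) 1)), B t ∈ Ici (0:ℝ) := by
        refine (MeasureTheory.ae_restrict_mem measurableSet_Ioc).mono fun t ht => ?_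
        have ht' : t ∈ Icc (0:ℝ) 1 := Ioc_subset_Icc_self ht
        have := (hgprob t ht').1
        exact Finset.sum_nonneg fun k _ => mul_nonneg (this k) (by positivity)
      have hBi : MeasureTheory.Integrable B (MeasureTheory.volume.restrict (Ioc (0:ℝ) 1)) :=
        (hBcont.integrableOn_Icc).mono_set Ioc_subset_Icc_self
      have hBqi : MeasureTheory.Integrable ((fun x : ℝ => x ^ (1/q)) ∘ B)
          (MeasureTheory.volume.restrict (Ioc (0:ℝ) 1)) :=
        (hBqcont.integrableOn_Icc).mono_set Ioc_subset_Icc_self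
      exact hconc.le_map_integral hcont isClosed_Ici hmem hBi hBqi
    -- assemble
    have chain : ∑ k, |c k| ≤ (∫ t in (0:ℝ)..1, B t) ^ (1/q) := by
      calc ∑ k, |c k| ≤ ∑ k, ∫ t in (0:ℝ)..1, g t k * |v t k| :=
            Finset.sum_le_sum fun k _ => step2 k
        _ = ∫ t in (0:ℝ)..1, A t := by
            rw [← intervalIntegral.integral_finset_sum (fun k _ => hIntgv k)]
        _ ≤ ∫ t in (0:ℝ)..1, B t ^ (1/q) :=
            intervalIntegral.integral_mono_on zero_le_one hIntA hIntBq step3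
        _ ≤ (∫ t in (0:ℝ)..1, B t) ^ (1/q) := step4
    have : (1/2 : ℝ) * ∑ x, |f1 x - f0 x| ≤ ∑ k, |c k| := by linarith
    exact this.trans chain
  refine ⟨main, ?_⟩
  rintro x ⟨v, g, hv, hg, hgp, htr, rfl⟩
  exact main v g hv hg hgp htr
end

section
/- Let G be a finite directed graph whose underlying undirected graph is connected, and let q ≥ 1. Then V_q is a metric on the set of probability distributions on V: V_q(f0,f1) ≥ 0 with equality iff f0 = f1; V_q(f0,f1) = V_q(f1,f0); and V_q(f0,f2) ≤ V_q(f0,f1) + V_q(f1,f2) for all probability distributions f0, f1, f2 on V. -/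
open scoped BigOperators
open Set

/-- `V_q`: infimum of `I_q` over transport solutions with given endpoints. -/
noncomputable def Vq {V E : Type*} [Fintype V] [Fintype E] [DecidableEq V]
    (G : DiGraph V E) (q : ℝ) (f0 f1 : V → ℝ) : ℝ :=
  sInf {c : ℝ | ∃ sol : TransportSolution G,
    sol.f 0 = f0 ∧ sol.f 1 = f1 ∧ c = Iq q sol.v sol.g}

section AuxBasic
open MeasureTheory intervalIntegral

variable {V E : Type*} [Fintype V] [Fintype E] [DecidableEq V] {G : DiGraph V E}

lemma rpow_const_continuous {q : ℝ} (hq : 0 < q) : Continuous fun x : ℝ => x ^ q :=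
  continuous_iff_continuousAt.2 fun x => Real.continuousAt_rpow_const x q (Or.inr hq.le)

lemma costFun_nonneg {q : ℝ} (hq : 1 ≤ q) (sol : TransportSolution G) {t : ℝ}
    (ht : t ∈ Icc (0:ℝ) 1) : 0 ≤ ∑ k, sol.g t k * |sol.v t k| ^ q :=
  Finset.sum_nonneg fun k _ => mul_nonneg ((sol.g_prob t ht).1 k) (Real.rpow_nonneg (abs_nonneg _) _)

lemma costIntegral_nonneg {q : ℝ} (hq : 1 ≤ q) (sol : TransportSolution G) :
    0 ≤ ∫ t in (0:ℝ)..1, ∑ k, sol.g t k * |sol.v t k| ^ q :=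
  intervalIntegral.integral_nonneg (by norm_num) fun u hu => costFun_nonneg hq sol hu

lemma Iq_nonneg {q : ℝ} (hq : 1 ≤ q) (sol : TransportSolution G) : 0 ≤ Iq q sol.v sol.g :=
  Real.rpow_nonneg (costIntegral_nonneg hq sol) _

lemma Vq_nonneg {q : ℝ} (hq : 1 ≤ q) (f0 f1 : V → ℝ) : 0 ≤ Vq G q f0 f1 :=
  Real.sInf_nonneg (by rintro c ⟨sol, -, -, rfl⟩; exact Iq_nonneg hq sol)

lemma cont_apply {h : ℝ → E → ℝ} (hc : ContinuousOn (fun t => h t) (Icc (0:ℝ) 1)) (k : E) :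
    ContinuousOn (fun t => h t k) (Icc (0:ℝ) 1) :=
  (continuous_apply k).comp_continuousOn hc

lemma costFun_continuousOn {q : ℝ} (hq : 1 ≤ q) (sol : TransportSolution G) :
    ContinuousOn (fun t => ∑ k, sol.g t k * |sol.v t k| ^ q) (Icc (0:ℝ) 1) := by
  apply continuousOn_finset_sum
  intro k _
  exact (cont_apply sol.g_cont k).mul
    ((rpow_const_continuous (by linarith)).comp_continuousOn (cont_apply sol.v_cont k).abs)

end AuxBasic
section AuxFlow
variable {V E : Type*} [Fintype V] [Fintype E] [DecidableEq V] {G : DiGraph V E}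

lemma incidence_eq (G : DiGraph V E) (k : E) (z : V) :
    G.incidence z k = (if G.head k = z then (1:ℝ) else 0) - (if G.tail k = z then 1 else 0) := by
  unfold DiGraph.incidence
  by_cases h1 : G.head k = z <;> by_cases h2 : G.tail k = z <;> simp [h1, h2]
  exact absurd (h2.trans h1.symm) (G.ne k)

lemma exists_flow_of_walk (G : DiGraph V E) {x y : V} (p : G.toSimpleGraph.Walk x y) :
    ∃ u : E → ℝ, ∀ z, ∑ k, G.incidence z k * u k
      = (if y = z then 1 else 0) - (if x = z then 1 else 0) := by
  classical
  induction p with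
  | nil => exact ⟨0, by simp⟩
  | @cons x x' y h p ih =>
    obtain ⟨u, hu⟩ := ih
    obtain ⟨-, k0, hk⟩ := h
    rcases hk with ⟨ht, hh⟩ | ⟨ht, hh⟩
    · refine ⟨fun k => u k + if k = k0 then 1 else 0, fun z => ?_⟩
      have : ∀ k, G.incidence z k * (u k + if k = k0 then 1 else 0)
          = G.incidence z k * u k + (if k = k0 then G.incidence z k else 0) := by
        intro k; split <;> ring
      simp only [this, Finset.sum_add_distrib, Finset.sum_ite_eq' Finset.univ k0,
        Finset.mem_univ, if_true, hu z, incidence_eq G k0 z, ht, hh]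
      ring
    · refine ⟨fun k => u k + if k = k0 then -1 else 0, fun z => ?_⟩
      have : ∀ k, G.incidence z k * (u k + if k = k0 then -1 else 0)
          = G.incidence z k * u k + (if k = k0 then -G.incidence z k else 0) := by
        intro k; split <;> ring
      simp only [this, Finset.sum_add_distrib, Finset.sum_ite_eq' Finset.univ k0,
        Finset.mem_univ, if_true, hu z, incidence_eq G k0 z, ht, hh]
      ring

lemma exists_flow (G : DiGraph V E) (hconn : G.toSimpleGraph.Connected) (δ : V → ℝ)
    (hδ : ∑ z, δ z = 0) : ∃ u : E → ℝ, ∀ z, ∑ k, G.incidence z k * u k = δ z := by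
  classical
  obtain ⟨x0⟩ := hconn.nonempty
  have H : ∀ y : V, ∃ u : E → ℝ, ∀ z, ∑ k, G.incidence z k * u k
      = (if y = z then 1 else 0) - (if x0 = z then 1 else 0) :=
    fun y => (hconn.preconnected y x0).elim fun p => by
      simpa using exists_flow_of_walk G p.reverse
  choose u hu using H
  refine ⟨fun k => ∑ y, δ y * u y k, fun z => ?_⟩
  have step1 : ∑ k, G.incidence z k * ∑ y, δ y * u y k
      = ∑ y, δ y * ∑ k, G.incidence z k * u y k := by
    simp_rw [Finset.mul_sum]
    rw [Finset.sum_comm]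
    congr 1; funext y; congr 1; funext k; ring
  rw [step1]
  simp only [hu, mul_sub]
  rw [Finset.sum_sub_distrib]
  simp only [mul_ite, mul_one, mul_zero]
  rw [Finset.sum_ite_eq' Finset.univ z δ]
  simp only [Finset.mem_univ, if_true]
  split_ifs <;> simp [hδ]

end AuxFlow
section AuxExist
open MeasureTheory
variable {V E : Type*} [Fintype V] [Fintype E] [DecidableEq V] {G : DiGraph V E}

lemma nonempty_of_prob {f0 : V → ℝ} (h : IsProbDist f0) : Nonempty V := by
  rcases isEmpty_or_nonempty V with hV | hV
  · have := h.2
    rw [Finset.univ_eq_empty, Finset.sum_empty] at this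
    norm_num at this
  · exact hV

lemma exists_sol (hconn : G.toSimpleGraph.Connected) {f0 f1 : V → ℝ}
    (h0 : IsProbDist f0) (h1 : IsProbDist f1) (hE : Nonempty E) :
    ∃ sol : TransportSolution G, sol.f 0 = f0 ∧ sol.f 1 = f1 := by
  classical
  obtain ⟨u, hu⟩ := exists_flow G hconn (fun z => f1 z - f0 z)
    (by rw [Finset.sum_sub_distrib, h0.2, h1.2, sub_self])
  set N : ℝ := (Fintype.card E : ℝ) with hNdef
  have hN : 0 < N := by
    simp only [hNdef, Nat.cast_pos]
    exact Fintype.card_pos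
  refine ⟨{ f := fun t x => f0 x + t * (f1 x - f0 x)
            v := fun _ k => N * u k
            g := fun _ _ => N⁻¹
            f_prob := ?_
            g_prob := ?_
            v_cont := continuousOn_const
            g_cont := continuousOn_const
            transport := ?_ }, ?_, ?_⟩
  · intro t ht
    constructor
    · intro x
      show 0 ≤ f0 x + t * (f1 x - f0 x)
      have hrw : f0 x + t * (f1 x - f0 x) = (1 - t) * f0 x + t * f1 x := by ring
      rw [hrw]
      exact add_nonneg (mul_nonneg (by linarith [ht.2]) (h0.1 x)) (mul_nonneg ht.1 (h1.1 x))
    · show ∑ x, (f0 x + t * (f1 x - f0 x)) = 1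
      rw [Finset.sum_add_distrib, ← Finset.mul_sum, Finset.sum_sub_distrib, h0.2, h1.2]
      ring
  · intro t _
    refine ⟨fun _ => by positivity, ?_⟩
    rw [Finset.sum_const, nsmul_eq_mul, Finset.card_univ, mul_inv_cancel₀ hN.ne']
  · intro x t _
    have key : ∑ k, G.incidence x k * (N * u k) * N⁻¹ = f1 x - f0 x := by
      have hterm : ∀ k, G.incidence x k * (N * u k) * N⁻¹
          = N * N⁻¹ * (G.incidence x k * u k) := fun k => by ring
      simp only [hterm, ← Finset.mul_sum, mul_inv_cancel₀ hN.ne', one_mul]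
      exact hu x
    rw [key]
    exact ((hasDerivAt_mul_const (f1 x - f0 x)).const_add (f0 x)).hasDerivWithinAt
  · funext x; simp
  · funext x; simp

lemma Iq_zero_of_v_zero {q : ℝ} (hq : 1 ≤ q) (g : ℝ → E → ℝ) :
    Iq q (fun _ _ => (0:ℝ)) g = 0 := by
  have hq0 : q ≠ 0 := by positivity
  unfold Iq
  have : ∀ t : ℝ, ∑ k : E, g t k * |(0:ℝ)| ^ q = 0 := by
    intro t; simp [Real.zero_rpow hq0]
  simp only [this, intervalIntegral.integral_zero]
  rw [Real.zero_rpow (by positivity)]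

lemma Vq_self {q : ℝ} (hq : 1 ≤ q) (hE : Nonempty E) {f0 : V → ℝ} (h0 : IsProbDist f0) :
    Vq G q f0 f0 = 0 := by
  classical
  have hN : (0:ℝ) < (Fintype.card E : ℝ) := by
    simp only [Nat.cast_pos]; exact Fintype.card_pos
  have hbdd : BddBelow {c : ℝ | ∃ sol : TransportSolution G,
      sol.f 0 = f0 ∧ sol.f 1 = f0 ∧ c = Iq q sol.v sol.g} :=
    ⟨0, by rintro c ⟨sol, -, -, rfl⟩; exact Iq_nonneg hq sol⟩
  have hmem : (0:ℝ) ∈ {c : ℝ | ∃ sol : TransportSolution G,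
      sol.f 0 = f0 ∧ sol.f 1 = f0 ∧ c = Iq q sol.v sol.g} := by
    refine ⟨{ f := fun _ => f0
              v := fun _ _ => 0
              g := fun _ _ => (Fintype.card E : ℝ)⁻¹
              f_prob := fun t _ => h0
              g_prob := fun t _ => ⟨fun _ => by positivity, by
                rw [Finset.sum_const, nsmul_eq_mul, Finset.card_univ, mul_inv_cancel₀ hN.ne']⟩
              v_cont := continuousOn_const
              g_cont := continuousOn_const
              transport := by
                intro x t _
                simp only [zero_mul, mul_zero, zero_mul, Finset.sum_const_zero]
                exact (hasDerivWithinAt_const _ _ _) }, rfl, rfl, ?_⟩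
    rw [Iq_zero_of_v_zero hq]
  exact le_antisymm (csInf_le hbdd hmem) (Vq_nonneg hq f0 f0)

lemma subsingleton_of_no_edges (hconn : G.toSimpleGraph.Connected) (hE : IsEmpty E) :
    Subsingleton V := by
  constructor
  intro a b
  by_contra hab
  obtain ⟨p⟩ := hconn.preconnected a b
  cases p with
  | nil => exact hab rfl
  | cons h p =>
    obtain ⟨k, -⟩ := h.2
    exact hE.elim k

lemma prob_eq_of_subsingleton (hVs : Subsingleton V) {f0 f1 : V → ℝ}
    (h0 : IsProbDist f0) (h1 : IsProbDist f1) : f0 = f1 := by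
  funext x
  have huniv : (Finset.univ : Finset V) = {x} := by
    ext y; simp [hVs.elim y x]
  have hx : ∀ f : V → ℝ, IsProbDist f → f x = 1 := by
    intro f hf
    have := hf.2
    rwa [huniv, Finset.sum_singleton] at this
  rw [hx f0 h0, hx f1 h1]

lemma Vq_of_no_edges (hE : IsEmpty E) (q : ℝ) (f0 f1 : V → ℝ) : Vq G q f0 f1 = 0 := by
  have : {c : ℝ | ∃ sol : TransportSolution G,
      sol.f 0 = f0 ∧ sol.f 1 = f1 ∧ c = Iq q sol.v sol.g} = ∅ := by
    ext c
    simp only [Set.mem_setOf_eq, Set.mem_empty_iff_false, iff_false]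
    rintro ⟨sol, -, -, -⟩
    have := (sol.g_prob 0 ⟨le_refl 0, zero_le_one⟩).2
    rw [Finset.univ_eq_empty, Finset.sum_empty] at this
    norm_num at this
  rw [Vq, this, Real.sInf_empty]

end AuxExist
section AuxLower
open MeasureTheory intervalIntegral
variable {V E : Type*} [Fintype V] [Fintype E] [DecidableEq V] {G : DiGraph V E}

lemma abs_incidence_le_one (G : DiGraph V E) (x : V) (k : E) : |G.incidence x k| ≤ 1 := by
  unfold DiGraph.incidence
  split_ifs <;> norm_num

lemma abs_le_Iq {q : ℝ} (hq : 1 ≤ q) (sol : TransportSolution G) (x : V) :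
    |sol.f 1 x - sol.f 0 x| ≤ Iq q sol.v sol.g := by
  have hq0 : (0:ℝ) < q := by linarith
  set φ : ℝ → ℝ := fun t => ∑ k, G.incidence x k * sol.v t k * sol.g t k with hφ
  set h : ℝ → ℝ := fun t => ∑ k, sol.g t k * |sol.v t k| with hh
  set H : ℝ → ℝ := fun t => ∑ k, sol.g t k * |sol.v t k| ^ q with hH
  have hφc : ContinuousOn φ (Icc (0:ℝ) 1) := by
    apply continuousOn_finset_sum
    intro k _
    exact (continuousOn_const.mul (cont_apply sol.v_cont k)).mul (cont_apply sol.g_cont k)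
  have hhc : ContinuousOn h (Icc (0:ℝ) 1) := by
    apply continuousOn_finset_sum
    intro k _
    exact (cont_apply sol.g_cont k).mul (cont_apply sol.v_cont k).abs
  have hHc : ContinuousOn H (Icc (0:ℝ) 1) := costFun_continuousOn hq sol
  have huIcc : uIcc (0:ℝ) 1 = Icc 0 1 := uIcc_of_le (by norm_num)
  -- FTC
  have hFTC : ∫ t in (0:ℝ)..1, φ t = sol.f 1 x - sol.f 0 x := by
    refine integral_eq_sub_of_hasDeriv_right_of_le (f := fun t => sol.f t x) (f' := φ)
      (by norm_num) (fun t ht => (sol.transport x t ht).continuousWithinAt) ?_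
      ((hφc.mono (by rw [huIcc])).intervalIntegrable)
    intro t ht
    refine (sol.transport x t (Ioo_subset_Icc_self ht)).mono_of_mem_nhdsWithin ?_
    refine Filter.mem_of_superset (Ioo_mem_nhdsGT_of_mem ⟨le_refl t, ht.2⟩) ?_
    exact fun y hy => ⟨le_of_lt (lt_of_le_of_lt ht.1.le hy.1), hy.2.le⟩
  -- pointwise |φ| ≤ h
  have hφh : ∀ t ∈ Icc (0:ℝ) 1, |φ t| ≤ h t := by
    intro t ht
    refine le_trans (Finset.abs_sum_le_sum_abs _ _) (Finset.sum_le_sum fun k _ => ?_)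
    have hg0 := (sol.g_prob t ht).1 k
    rw [abs_mul, abs_mul, abs_of_nonneg hg0]
    calc |G.incidence x k| * |sol.v t k| * sol.g t k
        ≤ 1 * |sol.v t k| * sol.g t k := by
          apply mul_le_mul_of_nonneg_right _ hg0
          exact mul_le_mul_of_nonneg_right (abs_incidence_le_one G x k) (abs_nonneg _)
      _ = sol.g t k * |sol.v t k| := by ring
  -- step: |Δ| ≤ ∫ h
  have hstep1 : |sol.f 1 x - sol.f 0 x| ≤ ∫ t in (0:ℝ)..1, h t := by
    rw [← hFTC]
    refine le_trans (intervalIntegral.abs_integral_le_integral_abs (by norm_num)) ?_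
    apply intervalIntegral.integral_mono_on (by norm_num)
    · exact ((hφc.mono (by rw [huIcc])).abs).intervalIntegrable
    · exact (hhc.mono (by rw [huIcc])).intervalIntegrable
    · exact hφh
  -- pointwise Jensen in k
  have hJk : ∀ t ∈ Icc (0:ℝ) 1, h t ^ q ≤ H t := by
    intro t ht
    exact Real.rpow_arith_mean_le_arith_mean_rpow Finset.univ (sol.g t)
      (fun k => |sol.v t k|) (fun k _ => (sol.g_prob t ht).1 k) (sol.g_prob t ht).2
      (fun k _ => abs_nonneg _) hq
  -- integral Jensen in t
  set μ : Measure ℝ := volume.restrict (Ioc (0:ℝ) 1) with hμ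
  haveI : IsProbabilityMeasure μ := ⟨by simp [hμ, Real.volume_Ioc]⟩
  have hIocIcc : Ioc (0:ℝ) 1 ⊆ Icc 0 1 := Ioc_subset_Icc_self
  have hih : IntegrableOn h (Ioc (0:ℝ) 1) volume :=
    (hhc.integrableOn_Icc).mono_set hIocIcc
  have hihq : IntegrableOn (fun t => h t ^ q) (Ioc (0:ℝ) 1) volume := by
    refine (((rpow_const_continuous hq0).comp_continuousOn hhc).integrableOn_Icc).mono_set hIocIcc
  have hiH : IntegrableOn H (Ioc (0:ℝ) 1) volume :=
    (hHc.integrableOn_Icc).mono_set hIocIcc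
  have hJens : (∫ t, h t ∂μ) ^ q ≤ ∫ t, h t ^ q ∂μ := by
    refine (convexOn_rpow hq).map_integral_le
      ((rpow_const_continuous hq0).continuousOn) isClosed_Ici ?_ hih hihq
    refine ae_restrict_of_forall_mem measurableSet_Ioc fun t ht => ?_
    exact Finset.sum_nonneg fun k _ =>
      mul_nonneg ((sol.g_prob t (hIocIcc ht)).1 k) (abs_nonneg _)
  have hmono : ∫ t, h t ^ q ∂μ ≤ ∫ t, H t ∂μ := by
    refine integral_mono_ae hihq hiH ?_
    exact ae_restrict_of_forall_mem measurableSet_Ioc fun t ht => hJk t (hIocIcc ht)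
  have heq1 : ∫ t in (0:ℝ)..1, h t = ∫ t, h t ∂μ := by
    rw [intervalIntegral.integral_of_le (by norm_num : (0:ℝ) ≤ 1)]
  have heq2 : ∫ t in (0:ℝ)..1, H t = ∫ t, H t ∂μ := by
    rw [intervalIntegral.integral_of_le (by norm_num : (0:ℝ) ≤ 1)]
  -- assemble
  have habs0 : (0:ℝ) ≤ |sol.f 1 x - sol.f 0 x| := abs_nonneg _
  have hfinal : |sol.f 1 x - sol.f 0 x| ^ q ≤ ∫ t in (0:ℝ)..1, H t := by
    calc |sol.f 1 x - sol.f 0 x| ^ q ≤ (∫ t in (0:ℝ)..1, h t) ^ q :=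
          Real.rpow_le_rpow habs0 hstep1 hq0.le
      _ = (∫ t, h t ∂μ) ^ q := by rw [heq1]
      _ ≤ ∫ t, h t ^ q ∂μ := hJens
      _ ≤ ∫ t, H t ∂μ := hmono
      _ = ∫ t in (0:ℝ)..1, H t := heq2.symm
  have : |sol.f 1 x - sol.f 0 x| = (|sol.f 1 x - sol.f 0 x| ^ q) ^ (1/q) := by
    rw [one_div, Real.rpow_rpow_inv habs0 hq0.ne']
  rw [this]
  unfold Iq
  exact Real.rpow_le_rpow (Real.rpow_nonneg habs0 q) hfinal (by positivity)

end AuxLower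
section AuxClamp
open MeasureTheory
variable {V E : Type*} [Fintype V] [Fintype E] [DecidableEq V] {G : DiGraph V E}

noncomputable def cl (t : ℝ) : ℝ := min 1 (max 0 t)

lemma cl_mem (t : ℝ) : cl t ∈ Icc (0:ℝ) 1 :=
  ⟨le_min zero_le_one (le_max_left 0 t), min_le_left 1 _⟩

lemma cl_eq {t : ℝ} (ht : t ∈ Icc (0:ℝ) 1) : cl t = t := by
  unfold cl
  rw [max_eq_right ht.1, min_eq_right ht.2]

lemma cl_continuous : Continuous cl :=
  continuous_const.min (continuous_const.max continuous_id)

lemma cl_zero : cl 0 = 0 := cl_eq ⟨le_refl 0, zero_le_one⟩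
lemma cl_one : cl 1 = 1 := cl_eq ⟨zero_le_one, le_refl 1⟩

noncomputable def TransportSolution.clamp (sol : TransportSolution G) : TransportSolution G where
  f t := sol.f (cl t)
  v t := sol.v (cl t)
  g t := sol.g (cl t)
  f_prob t _ := sol.f_prob (cl t) (cl_mem t)
  g_prob t _ := sol.g_prob (cl t) (cl_mem t)
  v_cont := (sol.v_cont.comp_continuous cl_continuous cl_mem).continuousOn
  g_cont := (sol.g_cont.comp_continuous cl_continuous cl_mem).continuousOn
  transport x t ht := by
    show HasDerivWithinAt (fun s => sol.f (cl s) x)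
      (∑ k, G.incidence x k * sol.v (cl t) k * sol.g (cl t) k) (Icc 0 1) t
    rw [cl_eq ht]
    exact (sol.transport x t ht).congr (fun s hs => by rw [cl_eq hs]) (by rw [cl_eq ht])

namespace TransportSolution
variable (sol : TransportSolution G)

lemma clamp_f_apply (t : ℝ) : sol.clamp.f t = sol.f (cl t) := rfl
lemma clamp_zero : sol.clamp.f 0 = sol.f 0 := by rw [clamp_f_apply, cl_zero]
lemma clamp_one : sol.clamp.f 1 = sol.f 1 := by rw [clamp_f_apply, cl_one]
lemma clamp_f_prob (t : ℝ) : IsProbDist (sol.clamp.f t) := sol.f_prob (cl t) (cl_mem t)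
lemma clamp_g_prob (t : ℝ) : IsProbDist (sol.clamp.g t) := sol.g_prob (cl t) (cl_mem t)
lemma clamp_v_cont : Continuous (fun t => sol.clamp.v t) :=
  sol.v_cont.comp_continuous cl_continuous cl_mem
lemma clamp_g_cont : Continuous (fun t => sol.clamp.g t) :=
  sol.g_cont.comp_continuous cl_continuous cl_mem

lemma clamp_Iq (q : ℝ) : Iq q sol.clamp.v sol.clamp.g = Iq q sol.v sol.g := by
  unfold Iq
  congr 1
  apply intervalIntegral.integral_congr
  intro t ht
  rw [uIcc_of_le (by norm_num : (0:ℝ) ≤ 1)] at ht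
  show ∑ k, sol.clamp.g t k * |sol.clamp.v t k| ^ q = _
  have : cl t = t := cl_eq ht
  show ∑ k, sol.g (cl t) k * |sol.v (cl t) k| ^ q = _
  rw [this]

end TransportSolution

end AuxClamp

section AuxSymm
open MeasureTheory
variable {V E : Type*} [Fintype V] [Fintype E] [DecidableEq V] {G : DiGraph V E}

lemma mem_Icc_one_sub {t : ℝ} (ht : t ∈ Icc (0:ℝ) 1) : 1 - t ∈ Icc (0:ℝ) 1 := by
  constructor <;> [linarith [ht.2]; linarith [ht.1]]

lemma exists_rev (q : ℝ) (sol : TransportSolution G) :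
    ∃ sol' : TransportSolution G, sol'.f 0 = sol.f 1 ∧ sol'.f 1 = sol.f 0 ∧
      Iq q sol'.v sol'.g = Iq q sol.v sol.g := by
  have hmaps : MapsTo (fun s : ℝ => 1 - s) (Icc (0:ℝ) 1) (Icc (0:ℝ) 1) :=
    fun s hs => mem_Icc_one_sub hs
  refine ⟨{ f := fun t => sol.f (1 - t)
            v := fun t => -sol.v (1 - t)
            g := fun t => sol.g (1 - t)
            f_prob := fun t ht => sol.f_prob (1 - t) (mem_Icc_one_sub ht)
            g_prob := fun t ht => sol.g_prob (1 - t) (mem_Icc_one_sub ht)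
            v_cont := (sol.v_cont.comp ((continuous_const.sub continuous_id).continuousOn)
              hmaps).neg
            g_cont := sol.g_cont.comp ((continuous_const.sub continuous_id).continuousOn) hmaps
            transport := ?_ }, by norm_num, by norm_num, ?_⟩
  · intro x t ht
    have inner : HasDerivWithinAt (fun s : ℝ => 1 - s) (-1) (Icc (0:ℝ) 1) t := by
      simpa using ((hasDerivAt_id t).const_sub 1).hasDerivWithinAt
    have outer := sol.transport x (1 - t) (mem_Icc_one_sub ht)
    have hcomp := HasDerivWithinAt.comp t outer inner hmaps
    refine HasDerivWithinAt.congr_deriv hcomp ?_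
    symm
    rw [Finset.sum_mul]
    apply Finset.sum_congr rfl
    intro k _
    show G.incidence x k * (-sol.v (1 - t)) k * sol.g (1 - t) k = _
    rw [Pi.neg_apply]
    ring
  · unfold Iq
    congr 1
    have hrw : (fun t => ∑ k, sol.g (1 - t) k * |(-sol.v (1 - t)) k| ^ q)
        = fun t => (fun u => ∑ k, sol.g u k * |sol.v u k| ^ q) (1 - t) := by
      funext t
      simp [abs_neg]
    show (∫ t in (0:ℝ)..1, ∑ k, sol.g (1-t) k * |(-sol.v (1-t)) k| ^ q) = _
    rw [hrw]
    rw [intervalIntegral.integral_comp_sub_left (fun u => ∑ k, sol.g u k * |sol.v u k| ^ q) 1]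
    norm_num

lemma Vq_symm (q : ℝ) (f0 f1 : V → ℝ) : Vq G q f0 f1 = Vq G q f1 f0 := by
  unfold Vq
  congr 1
  ext c
  constructor
  · rintro ⟨sol, h0, h1, rfl⟩
    obtain ⟨sol', e0, e1, eI⟩ := exists_rev q sol
    exact ⟨sol', by rw [e0, h1], by rw [e1, h0], eI.symm⟩
  · rintro ⟨sol, h0, h1, rfl⟩
    obtain ⟨sol', e0, e1, eI⟩ := exists_rev q sol
    exact ⟨sol', by rw [e0, h1], by rw [e1, h0], eI.symm⟩

end AuxSymm
section AuxTheta

noncomputable def θc (n : ℕ) : ℝ := (2*n+1)/(2*n)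
noncomputable def θf (n : ℕ) (t : ℝ) : ℝ := θc n * (t - ((2*t-1)^(2*n+1) + 1)/(2*(2*n+1)))
noncomputable def θd (n : ℕ) (t : ℝ) : ℝ := θc n * (1 - (2*t-1)^(2*n))

variable {n : ℕ}

lemma θc_pos (hn : 1 ≤ n) : 0 < θc n := by
  have h : (0:ℝ) < (n:ℝ) := by exact_mod_cast hn
  unfold θc
  positivity

lemma θ_hasDerivAt (n : ℕ) (t : ℝ) : HasDerivAt (θf n) (θd n t) t := by
  have h1 : HasDerivAt (fun t : ℝ => 2*t-1) 2 t := by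
    simpa using ((hasDerivAt_id t).const_mul 2).sub_const 1
  have h2 : HasDerivAt (fun t : ℝ => (2*t-1)^(2*n+1))
      ((2*n+1 : ℕ) * (2*t-1)^(2*n) * 2) t := by
    have := h1.fun_pow (2*n+1)
    simpa [Nat.add_sub_cancel] using this
  have h3 := ((hasDerivAt_id t).sub ((h2.add_const 1).div_const (2*(2*n+1)))).const_mul (θc n)
  refine h3.congr_deriv ?_
  have hne : (2*(2*(n:ℝ)+1)) ≠ 0 := by positivity
  unfold θd
  push_cast
  field_simp

lemma θd_cont (n : ℕ) : Continuous (θd n) := by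
  apply continuous_const.mul
  exact continuous_const.sub (((continuous_const.mul continuous_id).sub continuous_const).pow _)

lemma pow_even_nonneg (x : ℝ) (n : ℕ) : 0 ≤ x^(2*n) := by
  rw [pow_mul]
  exact pow_nonneg (sq_nonneg x) n

lemma θd_nonneg (hn : 1 ≤ n) {t : ℝ} (ht : t ∈ Set.Icc (0:ℝ) 1) : 0 ≤ θd n t := by
  have h1 : (2*t-1)^(2*n) ≤ 1 := by
    rw [pow_mul]
    apply pow_le_one₀ (sq_nonneg _)
    rw [sq_le_one_iff_abs_le_one]
    rw [abs_le]
    constructor <;> [linarith [ht.1]; linarith [ht.2]]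
  exact mul_nonneg (θc_pos hn).le (by linarith)

lemma θd_le (hn : 1 ≤ n) (t : ℝ) : θd n t ≤ θc n := by
  have := pow_even_nonneg (2*t-1) n
  calc θd n t ≤ θc n * 1 := by
        apply mul_le_mul_of_nonneg_left _ (θc_pos hn).le
        linarith
    _ = θc n := mul_one _

lemma θf_zero (n : ℕ) : θf n 0 = 0 := by
  unfold θf
  have : ((2*(0:ℝ)-1))^(2*n+1) = -1 := by
    norm_num [pow_succ, pow_mul]
  rw [this]
  norm_num

lemma θf_one (hn : 1 ≤ n) : θf n 1 = 1 := by
  unfold θf θc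
  have h1 : ((2*(1:ℝ)-1))^(2*n+1) = 1 := by norm_num
  rw [h1]
  have hn1 : (0:ℝ) < n := by exact_mod_cast hn
  field_simp
  ring

lemma θd_zero (n : ℕ) : θd n 0 = 0 := by
  unfold θd
  have : ((2*(0:ℝ)-1))^(2*n) = 1 := by
    rw [pow_mul]; norm_num
  rw [this]; ring

lemma θd_one (n : ℕ) : θd n 1 = 0 := by
  unfold θd
  norm_num

lemma θf_cont (n : ℕ) : Continuous (θf n) :=
  continuous_iff_continuousAt.2 fun t => (θ_hasDerivAt n t).continuousAt

lemma θf_monotoneOn (hn : 1 ≤ n) : MonotoneOn (θf n) (Set.Icc (0:ℝ) 1) := by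
  apply monotoneOn_of_deriv_nonneg (convex_Icc 0 1) (θf_cont n).continuousOn
  · intro t _
    exact (θ_hasDerivAt n t).differentiableAt.differentiableWithinAt
  · intro t ht
    rw [interior_Icc] at ht
    rw [(θ_hasDerivAt n t).deriv]
    exact θd_nonneg hn (Set.Ioo_subset_Icc_self ht)

lemma θf_mem (hn : 1 ≤ n) {t : ℝ} (ht : t ∈ Set.Icc (0:ℝ) 1) : θf n t ∈ Set.Icc (0:ℝ) 1 := by
  constructor
  · rw [← θf_zero n]
    exact θf_monotoneOn hn (Set.left_mem_Icc.2 zero_le_one) ht ht.1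
  · rw [← θf_one hn]
    exact θf_monotoneOn hn ht (Set.right_mem_Icc.2 zero_le_one) ht.2

end AuxTheta
section AuxGlue
open MeasureTheory intervalIntegral
variable {V E : Type*} [Fintype V] [Fintype E] [DecidableEq V] {G : DiGraph V E}

lemma continuousOn_union_closed {X : Type*} [TopologicalSpace X] {F : ℝ → X} {s t : Set ℝ}
    (hs : IsClosed s) (ht : IsClosed t) (h1 : ContinuousOn F s) (h2 : ContinuousOn F t) :
    ContinuousOn F (s ∪ t) := by
  intro x hx
  have hws : ContinuousWithinAt F s x := by
    by_cases h : x ∈ s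
    · exact h1 x h
    · exact continuousWithinAt_of_notMem_closure (by rwa [hs.closure_eq])
  have hwt : ContinuousWithinAt F t x := by
    by_cases h : x ∈ t
    · exact h2 x h
    · exact continuousWithinAt_of_notMem_closure (by rwa [ht.closure_eq])
  exact hws.union hwt

lemma costFun_continuous_gen {q : ℝ} (hq : 0 < q) {v g : ℝ → E → ℝ}
    (hv : Continuous (fun t => v t)) (hg : Continuous (fun t => g t)) :
    Continuous (fun t => ∑ k, g t k * |v t k| ^ q) := by
  apply continuous_finset_sum
  intro k _
  exact ((continuous_apply k).comp hg).mul
    ((rpow_const_continuous hq).comp ((continuous_apply k).comp hv).abs)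

lemma rpow_le_factor {c K q : ℝ} (hq : 1 ≤ q) (h0 : 0 ≤ c) (hK : c ≤ K) :
    c ^ q ≤ K ^ (q-1) * c := by
  rcases eq_or_lt_of_le h0 with h | h
  · rw [← h, Real.zero_rpow (by positivity), mul_zero]
  · have : c ^ q = c ^ (q-1) * c := by
      rw [← Real.rpow_add_one h.ne' (q-1), sub_add_cancel]
    rw [this]
    exact mul_le_mul_of_nonneg_right (Real.rpow_le_rpow h0 hK (by linarith)) h0

lemma costFun_continuousOn_gen {q : ℝ} (hq : 0 < q) {v g : ℝ → E → ℝ} {S : Set ℝ}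
    (hv : ContinuousOn (fun t => v t) S) (hg : ContinuousOn (fun t => g t) S) :
    ContinuousOn (fun t => ∑ k, g t k * |v t k| ^ q) S := by
  apply continuousOn_finset_sum
  intro k _
  exact ((continuous_apply k).comp_continuousOn hg).mul
    ((rpow_const_continuous hq).comp_continuousOn ((continuous_apply k).comp_continuousOn hv).abs)

lemma Vq_bddBelow {q : ℝ} (hq : 1 ≤ q) (f0 f1 : V → ℝ) :
    BddBelow {c : ℝ | ∃ sol : TransportSolution G,
      sol.f 0 = f0 ∧ sol.f 1 = f1 ∧ c = Iq q sol.v sol.g} :=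
  ⟨0, by rintro c ⟨sol, -, -, rfl⟩; exact Iq_nonneg hq sol⟩

end AuxGlue
section AuxGlue2
open MeasureTheory intervalIntegral
variable {V E : Type*} [Fintype V] [Fintype E] [DecidableEq V] {G : DiGraph V E}

lemma glue_bound {q : ℝ} (hq : 1 ≤ q) (sol1 sol2 : TransportSolution G)
    (hmid : sol1.f 1 = sol2.f 0) {a d : ℝ} (ha : 0 < a) (had : a < d) (hd1 : d < 1)
    {n : ℕ} (hn : 1 ≤ n) :
    Vq G q (sol1.f 0) (sol2.f 1) ≤
      ((θc n * (1/a)) ^ (q-1) * Iq q sol1.v sol1.g ^ q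
        + (θc n * (1/(1-d))) ^ (q-1) * Iq q sol2.v sol2.g ^ q) ^ (1/q) := by
  classical
  have hq0 : (0:ℝ) < q := by linarith
  have h1d : (0:ℝ) < 1 - d := by linarith
  have hda : (0:ℝ) < d - a := by linarith
  set s1 := sol1.clamp with hs1
  set s2 := sol2.clamp with hs2
  have hmid' : s1.f 1 = s2.f 0 := by
    rw [hs1, hs2, sol1.clamp_one, sol2.clamp_zero, hmid]
  set τ1 : ℝ → ℝ := fun t => θf n (t/a) with hτ1
  set c1 : ℝ → ℝ := fun t => θd n (t/a) * (1/a) with hc1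
  set τ2 : ℝ → ℝ := fun t => θf n ((t-d)/(1-d)) with hτ2
  set c2 : ℝ → ℝ := fun t => θd n ((t-d)/(1-d)) * (1/(1-d)) with hc2
  have hτ1deriv : ∀ t, HasDerivAt τ1 (c1 t) t := fun t => by
    have h := (θ_hasDerivAt n (t/a)).comp t ((hasDerivAt_id t).div_const a)
    exact h.congr_deriv (by simp [hc1, one_div])
  have hτ2deriv : ∀ t, HasDerivAt τ2 (c2 t) t := fun t => by
    have h := (θ_hasDerivAt n ((t-d)/(1-d))).comp t
      (((hasDerivAt_id t).sub_const d).div_const (1-d))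
    exact h.congr_deriv (by simp [hc2, one_div])
  have hτ10 : τ1 0 = 0 := by rw [hτ1]; simp [θf_zero]
  have hτ1a : τ1 a = 1 := by rw [hτ1]; simp [div_self ha.ne', θf_one hn]
  have hτ2d : τ2 d = 0 := by rw [hτ2]; simp [θf_zero]
  have hτ21 : τ2 1 = 1 := by rw [hτ2]; simp [div_self h1d.ne', θf_one hn]
  have hc1a : c1 a = 0 := by rw [hc1]; simp [div_self ha.ne', θd_one]
  have hc2d : c2 d = 0 := by rw [hc2]; simp [θd_zero]
  have hm1 : ∀ t ∈ Icc (0:ℝ) a, τ1 t ∈ Icc (0:ℝ) 1 := fun t ht =>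
    θf_mem hn ⟨div_nonneg ht.1 ha.le, (div_le_one ha).2 ht.2⟩
  have hm2 : ∀ t ∈ Icc d 1, τ2 t ∈ Icc (0:ℝ) 1 := fun t ht =>
    θf_mem hn ⟨div_nonneg (by linarith [ht.1]) h1d.le, (div_le_one h1d).2 (by linarith [ht.2])⟩
  have hc1nn : ∀ t ∈ Icc (0:ℝ) a, 0 ≤ c1 t := fun t ht =>
    mul_nonneg (θd_nonneg hn ⟨div_nonneg ht.1 ha.le, (div_le_one ha).2 ht.2⟩) (by positivity)
  have hc2nn : ∀ t ∈ Icc d 1, 0 ≤ c2 t := fun t ht =>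
    mul_nonneg (θd_nonneg hn ⟨div_nonneg (by linarith [ht.1]) h1d.le,
      (div_le_one h1d).2 (by linarith [ht.2])⟩) (by positivity)
  have hc1le : ∀ t, c1 t ≤ θc n * (1/a) := fun t =>
    mul_le_mul_of_nonneg_right (θd_le hn _) (by positivity)
  have hc2le : ∀ t, c2 t ≤ θc n * (1/(1-d)) := fun t =>
    mul_le_mul_of_nonneg_right (θd_le hn _) (by positivity)
  -- glued components
  set F : ℝ → V → ℝ := fun t => if t ≤ a then s1.f (τ1 t) else if t ≤ d then s1.f 1
    else s2.f (τ2 t) with hF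
  set Vv : ℝ → E → ℝ := fun t => if t ≤ a then c1 t • s1.v (τ1 t) else if t ≤ d then 0
    else c2 t • s2.v (τ2 t) with hVv
  set Gg : ℝ → E → ℝ := fun t => if t ≤ a then s1.g (τ1 t) else if t ≤ d then
    ((d - t)/(d - a)) • s1.g 1 + ((t - a)/(d - a)) • s2.g 0 else s2.g (τ2 t) with hGg
  have e1F : ∀ t, t ≤ a → F t = s1.f (τ1 t) := fun t h => if_pos h
  have e1V : ∀ t, t ≤ a → Vv t = c1 t • s1.v (τ1 t) := fun t h => if_pos h
  have e1G : ∀ t, t ≤ a → Gg t = s1.g (τ1 t) := fun t h => if_pos h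
  have e2F : ∀ t ∈ Icc a d, F t = s1.f 1 := by
    intro t ht
    by_cases h : t ≤ a
    · have heq : t = a := le_antisymm h ht.1
      subst heq
      rw [e1F t le_rfl, hτ1a]
    · rw [hF]; simp only [if_neg h, if_pos ht.2]
  have e2V : ∀ t ∈ Icc a d, Vv t = 0 := by
    intro t ht
    by_cases h : t ≤ a
    · have heq : t = a := le_antisymm h ht.1
      subst heq
      rw [e1V t le_rfl, hc1a, zero_smul]
    · rw [hVv]; simp only [if_neg h, if_pos ht.2]
  have e2G : ∀ t ∈ Icc a d, Gg t
      = ((d - t)/(d - a)) • s1.g 1 + ((t - a)/(d - a)) • s2.g 0 := by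
    intro t ht
    by_cases h : t ≤ a
    · have heq : t = a := le_antisymm h ht.1
      subst heq
      rw [e1G t le_rfl, hτ1a]
      simp [div_self hda.ne']
    · rw [hGg]; simp only [if_neg h, if_pos ht.2]
  have e3F : ∀ t ∈ Icc d 1, F t = s2.f (τ2 t) := by
    intro t ht
    have hta : ¬ t ≤ a := not_le.2 (lt_of_lt_of_le had ht.1)
    by_cases h : t ≤ d
    · have heq : t = d := le_antisymm h ht.1
      subst heq
      rw [hF]
      simp only [if_neg hta, if_pos le_rfl]
      rw [hmid', hτ2d]
    · rw [hF]; simp only [if_neg hta, if_neg h]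
  have e3V : ∀ t ∈ Icc d 1, Vv t = c2 t • s2.v (τ2 t) := by
    intro t ht
    have hta : ¬ t ≤ a := not_le.2 (lt_of_lt_of_le had ht.1)
    by_cases h : t ≤ d
    · have heq : t = d := le_antisymm h ht.1
      subst heq
      rw [hVv]
      simp only [if_neg hta, if_pos le_rfl]
      rw [hc2d, zero_smul]
    · rw [hVv]; simp only [if_neg hta, if_neg h]
  have e3G : ∀ t ∈ Icc d 1, Gg t = s2.g (τ2 t) := by
    intro t ht
    have hta : ¬ t ≤ a := not_le.2 (lt_of_lt_of_le had ht.1)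
    by_cases h : t ≤ d
    · have heq : t = d := le_antisymm h ht.1
      subst heq
      rw [hGg]
      simp only [if_neg hta, if_pos le_rfl]
      rw [hτ2d]
      simp [sub_self, div_self hda.ne']
    · rw [hGg]; simp only [if_neg hta, if_neg h]
  -- continuity
  have hτ1c : Continuous τ1 := (θf_cont n).comp (continuous_id.div_const a)
  have hτ2c : Continuous τ2 :=
    (θf_cont n).comp ((continuous_id.sub continuous_const).div_const (1-d))
  have hc1c : Continuous c1 :=
    ((θd_cont n).comp (continuous_id.div_const a)).mul continuous_const
  have hc2c : Continuous c2 :=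
    ((θd_cont n).comp ((continuous_id.sub continuous_const).div_const (1-d))).mul continuous_const
  have hP1v : Continuous (fun t => c1 t • s1.v (τ1 t)) :=
    hc1c.smul (sol1.clamp_v_cont.comp hτ1c)
  have hP3v : Continuous (fun t => c2 t • s2.v (τ2 t)) :=
    hc2c.smul (sol2.clamp_v_cont.comp hτ2c)
  have hP1g : Continuous (fun t => s1.g (τ1 t)) := sol1.clamp_g_cont.comp hτ1c
  have hP3g : Continuous (fun t => s2.g (τ2 t)) := sol2.clamp_g_cont.comp hτ2c
  have hLg : Continuous (fun t => ((d - t)/(d - a)) • s1.g 1 + ((t - a)/(d - a)) • s2.g 0) :=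
    (((continuous_const.sub continuous_id).div_const _).smul continuous_const).add
      (((continuous_id.sub continuous_const).div_const _).smul continuous_const)
  have hIccU : Icc (0:ℝ) 1 = Icc 0 a ∪ (Icc a d ∪ Icc d 1) := by
    rw [Icc_union_Icc_eq_Icc had.le hd1.le, Icc_union_Icc_eq_Icc ha.le (had.le.trans hd1.le)]
  have hVvcont : ContinuousOn (fun t => Vv t) (Icc (0:ℝ) 1) := by
    rw [hIccU]
    refine continuousOn_union_closed isClosed_Icc (isClosed_Icc.union isClosed_Icc)
      (hP1v.continuousOn.congr fun t ht => e1V t ht.2) ?_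
    exact continuousOn_union_closed isClosed_Icc isClosed_Icc
      (continuousOn_const.congr fun t ht => e2V t ht)
      (hP3v.continuousOn.congr fun t ht => e3V t ht)
  have hGgcont : ContinuousOn (fun t => Gg t) (Icc (0:ℝ) 1) := by
    rw [hIccU]
    refine continuousOn_union_closed isClosed_Icc (isClosed_Icc.union isClosed_Icc)
      (hP1g.continuousOn.congr fun t ht => e1G t ht.2) ?_
    exact continuousOn_union_closed isClosed_Icc isClosed_Icc
      (hLg.continuousOn.congr fun t ht => e2G t ht)
      (hP3g.continuousOn.congr fun t ht => e3G t ht)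
  -- probability
  have hFprob : ∀ t ∈ Icc (0:ℝ) 1, IsProbDist (F t) := by
    intro t _
    rw [hF]
    dsimp only
    split_ifs
    · exact sol1.clamp_f_prob _
    · exact sol1.clamp_f_prob 1
    · exact sol2.clamp_f_prob _
  have hGgprob : ∀ t ∈ Icc (0:ℝ) 1, IsProbDist (Gg t) := by
    intro t ht
    rw [hGg]
    dsimp only
    split_ifs with h1 h2
    · exact sol1.clamp_g_prob _
    · have hat : a ≤ t := (not_le.1 h1).le
      have hl1 : 0 ≤ (d - t)/(d - a) := div_nonneg (by linarith) hda.le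
      have hl2 : 0 ≤ (t - a)/(d - a) := div_nonneg (by linarith) hda.le
      constructor
      · intro k
        simp only [Pi.add_apply, Pi.smul_apply, smul_eq_mul]
        exact add_nonneg (mul_nonneg hl1 ((sol1.clamp_g_prob 1).1 k))
          (mul_nonneg hl2 ((sol2.clamp_g_prob 0).1 k))
      · simp only [Pi.add_apply, Pi.smul_apply, smul_eq_mul]
        rw [Finset.sum_add_distrib, ← Finset.mul_sum, ← Finset.mul_sum,
          (sol1.clamp_g_prob 1).2, (sol2.clamp_g_prob 0).2, mul_one, mul_one,
          ← add_div, show d - t + (t - a) = d - a by ring]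
        exact div_self hda.ne'
    · exact sol2.clamp_g_prob _
  -- derivative pieces
  have P1 : ∀ (x : V), ∀ t ∈ Icc (0:ℝ) a, HasDerivWithinAt (fun s => F s x)
      ((∑ k, G.incidence x k * s1.v (τ1 t) k * s1.g (τ1 t) k) * c1 t) (Icc 0 a) t := by
    intro x t ht
    have hcomp := HasDerivWithinAt.comp t (s1.transport x (τ1 t) (hm1 t ht))
      ((hτ1deriv t).hasDerivWithinAt) (fun s hs => hm1 s hs)
    exact hcomp.congr (fun s hs => by rw [e1F s hs.2]; rfl) (by rw [e1F t ht.2]; rfl)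
  have P2 : ∀ (x : V), ∀ t ∈ Icc a d, HasDerivWithinAt (fun s => F s x) 0 (Icc a d) t := by
    intro x t ht
    exact (hasDerivWithinAt_const t _ (s1.f 1 x)).congr
      (fun s hs => by rw [e2F s hs]) (by rw [e2F t ht])
  have P3 : ∀ (x : V), ∀ t ∈ Icc d 1, HasDerivWithinAt (fun s => F s x)
      ((∑ k, G.incidence x k * s2.v (τ2 t) k * s2.g (τ2 t) k) * c2 t) (Icc d 1) t := by
    intro x t ht
    have hcomp := HasDerivWithinAt.comp t (s2.transport x (τ2 t) (hm2 t ht))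
      ((hτ2deriv t).hasDerivWithinAt) (fun s hs => hm2 s hs)
    exact hcomp.congr (fun s hs => by rw [e3F s hs]; rfl) (by rw [e3F t ht]; rfl)
  -- value identities
  have key1 : ∀ (x : V) (t : ℝ), t ≤ a → ∑ k, G.incidence x k * Vv t k * Gg t k
      = (∑ k, G.incidence x k * s1.v (τ1 t) k * s1.g (τ1 t) k) * c1 t := by
    intro x t h
    rw [Finset.sum_mul]
    apply Finset.sum_congr rfl
    intro k _
    rw [e1V t h, e1G t h, Pi.smul_apply, smul_eq_mul]
    ring
  have key2 : ∀ (x : V), ∀ t ∈ Icc a d, ∑ k, G.incidence x k * Vv t k * Gg t k = 0 := by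
    intro x t ht
    simp [e2V t ht]
  have key3 : ∀ (x : V), ∀ t ∈ Icc d 1, ∑ k, G.incidence x k * Vv t k * Gg t k
      = (∑ k, G.incidence x k * s2.v (τ2 t) k * s2.g (τ2 t) k) * c2 t := by
    intro x t ht
    rw [Finset.sum_mul]
    apply Finset.sum_congr rfl
    intro k _
    rw [e3V t ht, e3G t ht, Pi.smul_apply, smul_eq_mul]
    ring
  -- transport
  have htransport : ∀ (x : V), ∀ t ∈ Icc (0:ℝ) 1,
      HasDerivWithinAt (fun s => F s x) (∑ k, G.incidence x k * Vv t k * Gg t k)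
        (Icc (0:ℝ) 1) t := by
    intro x t ht
    rcases lt_or_ge t a with h | h
    · rw [key1 x t h.le]
      refine (P1 x t ⟨ht.1, h.le⟩).mono_of_mem_nhdsWithin ?_
      exact Filter.mem_of_superset (inter_mem_nhdsWithin (Icc 0 1) (Iic_mem_nhds h))
        (fun y hy => ⟨hy.1.1, hy.2⟩)
    · rcases eq_or_lt_of_le h with h' | h'
      · subst h'
        rw [key1 x a le_rfl, hc1a, mul_zero]
        have u1 := P1 x a ⟨ha.le, le_rfl⟩
        rw [hc1a, mul_zero] at u1
        have u3 := u1.union (P2 x a ⟨le_rfl, had.le⟩)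
        rw [Icc_union_Icc_eq_Icc ha.le had.le] at u3
        refine u3.mono_of_mem_nhdsWithin ?_
        exact Filter.mem_of_superset (inter_mem_nhdsWithin (Icc 0 1) (Iic_mem_nhds had))
          (fun y hy => ⟨hy.1.1, hy.2⟩)
      · rcases lt_or_ge t d with h2 | h2
        · rw [key2 x t ⟨h'.le, h2.le⟩]
          refine (P2 x t ⟨h'.le, h2.le⟩).mono_of_mem_nhdsWithin ?_
          exact Filter.mem_of_superset (inter_mem_nhdsWithin (Icc 0 1) (Ioo_mem_nhds h' h2))
            (fun y hy => ⟨hy.2.1.le, hy.2.2.le⟩)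
        · rcases eq_or_lt_of_le h2 with h3 | h3
          · subst h3
            rw [key2 x d ⟨had.le, le_rfl⟩]
            have u1 := P3 x d ⟨le_rfl, hd1.le⟩
            rw [hc2d, mul_zero] at u1
            have u3 := (P2 x d ⟨had.le, le_rfl⟩).union u1
            rw [Icc_union_Icc_eq_Icc had.le hd1.le] at u3
            refine u3.mono_of_mem_nhdsWithin ?_
            exact Filter.mem_of_superset (inter_mem_nhdsWithin (Icc 0 1) (Ioi_mem_nhds had))
              (fun y hy => ⟨hy.2.le, hy.1.2⟩)
          · rw [key3 x t ⟨h3.le, ht.2⟩]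
            refine (P3 x t ⟨h3.le, ht.2⟩).mono_of_mem_nhdsWithin ?_
            exact Filter.mem_of_superset (inter_mem_nhdsWithin (Icc 0 1) (Ioi_mem_nhds h3))
              (fun y hy => ⟨hy.2.le, hy.1.2⟩)
  -- the glued solution
  let glued : TransportSolution G := ⟨F, Vv, Gg, hFprob, hGgprob, hVvcont, hGgcont, htransport⟩
  have hg0 : glued.f 0 = sol1.f 0 := by
    show F 0 = sol1.f 0
    rw [e1F 0 ha.le, hτ10]
    exact sol1.clamp_zero
  have hg1 : glued.f 1 = sol2.f 1 := by
    show F 1 = sol2.f 1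
    rw [e3F 1 ⟨hd1.le, le_rfl⟩, hτ21]
    exact sol2.clamp_one
  -- cost analysis
  set W : ℝ → ℝ := fun t => ∑ k, Gg t k * |Vv t k| ^ q with hW
  have hWcont : ContinuousOn W (Icc (0:ℝ) 1) := costFun_continuousOn_gen hq0 hVvcont hGgcont
  have hsub1 : uIcc (0:ℝ) a ⊆ Icc 0 1 := by
    rw [uIcc_of_le ha.le]
    exact Icc_subset_Icc le_rfl (by linarith)
  have hsub2 : uIcc a d ⊆ Icc (0:ℝ) 1 := by
    rw [uIcc_of_le had.le]
    exact Icc_subset_Icc ha.le hd1.le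
  have hsub3 : uIcc d (1:ℝ) ⊆ Icc 0 1 := by
    rw [uIcc_of_le hd1.le]
    exact Icc_subset_Icc (by linarith) le_rfl
  have hi1 : IntervalIntegrable W volume 0 a := (hWcont.mono hsub1).intervalIntegrable
  have hi2 : IntervalIntegrable W volume a d := (hWcont.mono hsub2).intervalIntegrable
  have hi3 : IntervalIntegrable W volume d 1 := (hWcont.mono hsub3).intervalIntegrable
  have hsplitA : (∫ t in (0:ℝ)..a, W t) + ∫ t in a..d, W t = ∫ t in (0:ℝ)..d, W t :=
    integral_add_adjacent_intervals hi1 hi2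
  have hsplitB : (∫ t in (0:ℝ)..d, W t) + ∫ t in d..1, W t = ∫ t in (0:ℝ)..1, W t :=
    integral_add_adjacent_intervals (hi1.trans hi2) hi3
  have hmidzero : ∫ t in a..d, W t = 0 := by
    have heq : EqOn W (fun _ => (0:ℝ)) (uIcc a d) := by
      intro t ht
      rw [uIcc_of_le had.le] at ht
      show ∑ k, Gg t k * |Vv t k| ^ q = 0
      simp [e2V t ht, Real.zero_rpow hq0.ne']
    rw [intervalIntegral.integral_congr heq, intervalIntegral.integral_zero]
  set H1 : ℝ → ℝ := fun u => ∑ k, s1.g u k * |s1.v u k| ^ q with hH1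
  set H2 : ℝ → ℝ := fun u => ∑ k, s2.g u k * |s2.v u k| ^ q with hH2
  have hH1cont : Continuous H1 := costFun_continuous_gen hq0 sol1.clamp_v_cont sol1.clamp_g_cont
  have hH2cont : Continuous H2 := costFun_continuous_gen hq0 sol2.clamp_v_cont sol2.clamp_g_cont
  have hH1nn : ∀ u, 0 ≤ H1 u := fun u => Finset.sum_nonneg fun k _ =>
    mul_nonneg ((sol1.clamp_g_prob u).1 k) (Real.rpow_nonneg (abs_nonneg _) _)
  have hH2nn : ∀ u, 0 ≤ H2 u := fun u => Finset.sum_nonneg fun k _ =>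
    mul_nonneg ((sol2.clamp_g_prob u).1 k) (Real.rpow_nonneg (abs_nonneg _) _)
  have hX1nn : 0 ≤ ∫ u in (0:ℝ)..1, H1 u :=
    intervalIntegral.integral_nonneg (by norm_num) fun u _ => hH1nn u
  have hX2nn : 0 ≤ ∫ u in (0:ℝ)..1, H2 u :=
    intervalIntegral.integral_nonneg (by norm_num) fun u _ => hH2nn u
  have hIq1 : Iq q s1.v s1.g = (∫ u in (0:ℝ)..1, H1 u) ^ (1/q) := rfl
  have hIq2 : Iq q s2.v s2.g = (∫ u in (0:ℝ)..1, H2 u) ^ (1/q) := rfl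
  have hX1 : Iq q sol1.v sol1.g ^ q = ∫ u in (0:ℝ)..1, H1 u := by
    rw [← sol1.clamp_Iq q, ← hs1, hIq1, one_div, Real.rpow_inv_rpow hX1nn hq0.ne']
  have hX2 : Iq q sol2.v sol2.g ^ q = ∫ u in (0:ℝ)..1, H2 u := by
    rw [← sol2.clamp_Iq q, ← hs2, hIq2, one_div, Real.rpow_inv_rpow hX2nn hq0.ne']
  -- bound on [0,a]
  have hcov1 : ∫ t in (0:ℝ)..a, c1 t * H1 (τ1 t) = ∫ u in (0:ℝ)..1, H1 u := by
    have h := intervalIntegral.integral_comp_smul_deriv (a := (0:ℝ)) (b := a)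
      (f := τ1) (f' := c1) (g := H1) (fun t _ => hτ1deriv t) hc1c.continuousOn hH1cont
    rw [hτ10, hτ1a] at h
    simpa [smul_eq_mul, Function.comp] using h
  have hcov2 : ∫ t in d..(1:ℝ), c2 t * H2 (τ2 t) = ∫ u in (0:ℝ)..1, H2 u := by
    have h := intervalIntegral.integral_comp_smul_deriv (a := d) (b := (1:ℝ))
      (f := τ2) (f' := c2) (g := H2) (fun t _ => hτ2deriv t) hc2c.continuousOn hH2cont
    rw [hτ2d, hτ21] at h
    simpa [smul_eq_mul, Function.comp] using h
  have hb1 : ∫ t in (0:ℝ)..a, W t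
      ≤ (θc n * (1/a)) ^ (q-1) * ∫ u in (0:ℝ)..1, H1 u := by
    have hptw : ∀ t ∈ Icc (0:ℝ) a, W t ≤ (θc n * (1/a)) ^ (q-1) * (c1 t * H1 (τ1 t)) := by
      intro t ht
      have hWt : W t = c1 t ^ q * H1 (τ1 t) := by
        show ∑ k, Gg t k * |Vv t k| ^ q = _
        rw [hH1]
        dsimp only
        rw [Finset.mul_sum]
        apply Finset.sum_congr rfl
        intro k _
        rw [e1V t ht.2, e1G t ht.2, Pi.smul_apply, smul_eq_mul, abs_mul,
          Real.mul_rpow (abs_nonneg _) (abs_nonneg _), abs_of_nonneg (hc1nn t ht)]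
        ring
      rw [hWt]
      calc c1 t ^ q * H1 (τ1 t) ≤ ((θc n * (1/a)) ^ (q-1) * c1 t) * H1 (τ1 t) :=
            mul_le_mul_of_nonneg_right (rpow_le_factor hq (hc1nn t ht) (hc1le t)) (hH1nn _)
        _ = (θc n * (1/a)) ^ (q-1) * (c1 t * H1 (τ1 t)) := by ring
    have hrhs : IntervalIntegrable (fun t => (θc n * (1/a)) ^ (q-1) * (c1 t * H1 (τ1 t)))
        volume 0 a :=
      (continuous_const.mul (hc1c.mul (hH1cont.comp hτ1c))).intervalIntegrable _ _
    calc ∫ t in (0:ℝ)..a, W t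
        ≤ ∫ t in (0:ℝ)..a, (θc n * (1/a)) ^ (q-1) * (c1 t * H1 (τ1 t)) :=
          intervalIntegral.integral_mono_on ha.le hi1 hrhs hptw
      _ = (θc n * (1/a)) ^ (q-1) * ∫ t in (0:ℝ)..a, c1 t * H1 (τ1 t) :=
          intervalIntegral.integral_const_mul _ _
      _ = (θc n * (1/a)) ^ (q-1) * ∫ u in (0:ℝ)..1, H1 u := by rw [hcov1]
  have hb3 : ∫ t in d..(1:ℝ), W t
      ≤ (θc n * (1/(1-d))) ^ (q-1) * ∫ u in (0:ℝ)..1, H2 u := by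
    have hptw : ∀ t ∈ Icc d 1, W t ≤ (θc n * (1/(1-d))) ^ (q-1) * (c2 t * H2 (τ2 t)) := by
      intro t ht
      have hWt : W t = c2 t ^ q * H2 (τ2 t) := by
        show ∑ k, Gg t k * |Vv t k| ^ q = _
        rw [hH2]
        dsimp only
        rw [Finset.mul_sum]
        apply Finset.sum_congr rfl
        intro k _
        rw [e3V t ht, e3G t ht, Pi.smul_apply, smul_eq_mul, abs_mul,
          Real.mul_rpow (abs_nonneg _) (abs_nonneg _), abs_of_nonneg (hc2nn t ht)]
        ring
      rw [hWt]
      calc c2 t ^ q * H2 (τ2 t) ≤ ((θc n * (1/(1-d))) ^ (q-1) * c2 t) * H2 (τ2 t) :=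
            mul_le_mul_of_nonneg_right (rpow_le_factor hq (hc2nn t ht) (hc2le t)) (hH2nn _)
        _ = (θc n * (1/(1-d))) ^ (q-1) * (c2 t * H2 (τ2 t)) := by ring
    have hrhs : IntervalIntegrable (fun t => (θc n * (1/(1-d))) ^ (q-1) * (c2 t * H2 (τ2 t)))
        volume d 1 :=
      (continuous_const.mul (hc2c.mul (hH2cont.comp hτ2c))).intervalIntegrable _ _
    calc ∫ t in d..(1:ℝ), W t
        ≤ ∫ t in d..(1:ℝ), (θc n * (1/(1-d))) ^ (q-1) * (c2 t * H2 (τ2 t)) :=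
          intervalIntegral.integral_mono_on hd1.le hi3 hrhs hptw
      _ = (θc n * (1/(1-d))) ^ (q-1) * ∫ t in d..(1:ℝ), c2 t * H2 (τ2 t) :=
          intervalIntegral.integral_const_mul _ _
      _ = (θc n * (1/(1-d))) ^ (q-1) * ∫ u in (0:ℝ)..1, H2 u := by rw [hcov2]
  have hWnn : 0 ≤ ∫ t in (0:ℝ)..1, W t := by
    apply intervalIntegral.integral_nonneg (by norm_num)
    intro u hu
    exact Finset.sum_nonneg fun k _ =>
      mul_nonneg ((hGgprob u hu).1 k) (Real.rpow_nonneg (abs_nonneg _) _)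
  have htot : ∫ t in (0:ℝ)..1, W t
      ≤ (θc n * (1/a)) ^ (q-1) * Iq q sol1.v sol1.g ^ q
        + (θc n * (1/(1-d))) ^ (q-1) * Iq q sol2.v sol2.g ^ q := by
    rw [hX1, hX2, ← hsplitB, ← hsplitA, hmidzero, add_zero]
    exact add_le_add hb1 hb3
  have hle : Vq G q (sol1.f 0) (sol2.f 1) ≤ Iq q glued.v glued.g :=
    csInf_le (Vq_bddBelow hq _ _) ⟨glued, hg0, hg1, rfl⟩
  refine hle.trans ?_
  show (∫ t in (0:ℝ)..1, W t) ^ (1/q) ≤ _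
  exact Real.rpow_le_rpow hWnn htot (by positivity)

end AuxGlue2
section AuxTriangle
open MeasureTheory Filter Topology
variable {V E : Type*} [Fintype V] [Fintype E] [DecidableEq V] {G : DiGraph V E}

lemma term_eq {q P KK y : ℝ} (hq : 1 ≤ q) (hP : 0 < P) (hK : 0 < KK) (hy : 0 < y) :
    (P * (1/(y/KK))) ^ (q-1) * y ^ q = (P*KK) ^ (q-1) * y := by
  have h1 : P * (1/(y/KK)) = (P*KK)/y := by
    rw [one_div, inv_div]
    ring
  rw [h1, Real.div_rpow (by positivity) hy.le, div_mul_eq_mul_div, mul_div_assoc,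
    ← Real.rpow_sub hy, sub_sub_cancel, Real.rpow_one]

lemma θc_tendsto : Tendsto (fun m : ℕ => θc (m+1)) atTop (𝓝 1) := by
  have heq : (fun m : ℕ => θc (m+1)) = fun m : ℕ => 1 + (2*((m:ℝ)+1))⁻¹ := by
    funext m
    have hm : (0:ℝ) < (m:ℝ)+1 := by positivity
    unfold θc
    push_cast
    field_simp
  rw [heq]
  have h2 : Tendsto (fun m : ℕ => (2:ℝ)*((m:ℝ)+1)) atTop atTop := by
    apply Tendsto.const_mul_atTop two_pos
    exact tendsto_atTop_add_const_right _ _ tendsto_natCast_atTop_atTop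
  have h4 : Tendsto (fun m : ℕ => 1 + (2*((m:ℝ)+1))⁻¹) atTop (𝓝 (1 + 0)) :=
    tendsto_const_nhds.add h2.inv_tendsto_atTop
  rw [add_zero] at h4
  exact h4

lemma σ_tendsto : Tendsto (fun m : ℕ => (1:ℝ)/((m:ℝ)+1)) atTop (𝓝 0) :=
  tendsto_one_div_add_atTop_nhds_zero_nat

lemma Vq_triangle {q : ℝ} (hq : 1 ≤ q) (hconn : G.toSimpleGraph.Connected) (hE : Nonempty E)
    {f0 f1 f2 : V → ℝ} (h0 : IsProbDist f0) (h1 : IsProbDist f1) (h2 : IsProbDist f2) :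
    Vq G q f0 f2 ≤ Vq G q f0 f1 + Vq G q f1 f2 := by
  have hq0 : (0:ℝ) < q := by linarith
  refine le_of_forall_pos_le_add ?_
  intro ε hε
  -- pick nearly optimal solutions
  obtain ⟨sol1, e10, e11⟩ := exists_sol hconn h0 h1 hE
  obtain ⟨sol2, e20, e21⟩ := exists_sol hconn h1 h2 hE
  have hS1ne : {c : ℝ | ∃ sol : TransportSolution G,
      sol.f 0 = f0 ∧ sol.f 1 = f1 ∧ c = Iq q sol.v sol.g}.Nonempty :=
    ⟨Iq q sol1.v sol1.g, sol1, e10, e11, rfl⟩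
  have hS2ne : {c : ℝ | ∃ sol : TransportSolution G,
      sol.f 0 = f1 ∧ sol.f 1 = f2 ∧ c = Iq q sol.v sol.g}.Nonempty :=
    ⟨Iq q sol2.v sol2.g, sol2, e20, e21, rfl⟩
  obtain ⟨c1, hc1mem, hc1lt⟩ := exists_lt_of_csInf_lt hS1ne
    (lt_add_of_pos_right (Vq G q f0 f1) (half_pos hε))
  obtain ⟨c2, hc2mem, hc2lt⟩ := exists_lt_of_csInf_lt hS2ne
    (lt_add_of_pos_right (Vq G q f1 f2) (half_pos hε))
  obtain ⟨t1, ht10, ht11, rfl⟩ := hc1mem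
  obtain ⟨t2, ht20, ht21, rfl⟩ := hc2mem
  set A := Iq q t1.v t1.g with hA
  set B := Iq q t2.v t2.g with hB
  have hA0 : 0 ≤ A := Iq_nonneg hq t1
  have hB0 : 0 ≤ B := Iq_nonneg hq t2
  set S := A + B with hSdef
  have hS0 : 0 ≤ S := by positivity
  have hmid : t1.f 1 = t2.f 0 := by rw [ht11, ht20]
  -- the bound sequence
  set σ : ℕ → ℝ := fun m => 1/((m:ℝ)+1) with hσ
  have hσpos : ∀ m, 0 < σ m := fun m => by positivity
  set KK : ℕ → ℝ := fun m => S + 3*σ m with hKK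
  have hKpos : ∀ m, 0 < KK m := fun m => by
    have := hσpos m
    simp only [hKK]
    linarith
  set Bd : ℕ → ℝ := fun m => ((θc (m+1) * KK m) ^ (q-1) * KK m) ^ (1/q) with hBd
  have hθpos : ∀ m : ℕ, 0 < θc (m+1) := fun m => θc_pos (Nat.succ_le_succ (Nat.zero_le m))
  -- Vq ≤ Bd m for each m
  have hbound : ∀ m : ℕ, Vq G q f0 f2 ≤ Bd m := by
    intro m
    have hσm := hσpos m
    have hKm := hKpos m
    have hθm := hθpos m
    set α := A + σ m with hα
    set β := B + σ m with hβ
    have hαpos : 0 < α := by simp only [hα]; linarith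
    have hβpos : 0 < β := by simp only [hβ]; linarith
    set a := α / KK m with ha'
    set dd := 1 - β / KK m with hdd
    have ha : 0 < a := by positivity
    have h1d : 1 - dd = β / KK m := by rw [hdd]; ring
    have hd1 : dd < 1 := by
      rw [hdd]
      have : 0 < β / KK m := by positivity
      linarith
    have had : a < dd := by
      rw [hdd, ha']
      have hlt : (α + β) / KK m < 1 := by
        rw [div_lt_one hKm]
        simp only [hα, hβ, hKK, hSdef]
        linarith
      rw [add_div] at hlt
      linarith [div_pos hβpos hKm, div_pos hαpos hKm]
    have hglue := glue_bound hq t1 t2 hmid ha had hd1 (Nat.succ_le_succ (Nat.zero_le m))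
    rw [ht10, ht21] at hglue
    refine hglue.trans ?_
    rw [hBd]
    have h1dpos : 0 < 1 - dd := by rw [h1d]; positivity
    apply Real.rpow_le_rpow _ _ (by positivity)
    · refine add_nonneg (mul_nonneg (Real.rpow_nonneg ?_ _) (Real.rpow_nonneg hA0 _))
        (mul_nonneg (Real.rpow_nonneg ?_ _) (Real.rpow_nonneg hB0 _))
      · exact mul_nonneg hθm.le (by positivity)
      · exact mul_nonneg hθm.le (one_div_nonneg.2 h1dpos.le)
    · have hterm1 : (θc (m+1) * (1/a)) ^ (q-1) * A ^ q
          ≤ (θc (m+1) * KK m) ^ (q-1) * α := by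
        rw [← term_eq hq hθm hKm hαpos]
        apply mul_le_mul_of_nonneg_left _ (Real.rpow_nonneg (by positivity) _)
        exact Real.rpow_le_rpow hA0 (by simp only [hα]; linarith) hq0.le
      have hterm2 : (θc (m+1) * (1/(1-dd))) ^ (q-1) * B ^ q
          ≤ (θc (m+1) * KK m) ^ (q-1) * β := by
        rw [h1d, ← term_eq hq hθm hKm hβpos]
        apply mul_le_mul_of_nonneg_left _ (Real.rpow_nonneg (by positivity) _)
        exact Real.rpow_le_rpow hB0 (by simp only [hβ]; linarith) hq0.le
      calc (θc (m+1) * (1/a)) ^ (q-1) * A ^ q + (θc (m+1) * (1/(1-dd))) ^ (q-1) * B ^ q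
          ≤ (θc (m+1) * KK m) ^ (q-1) * α + (θc (m+1) * KK m) ^ (q-1) * β :=
            add_le_add hterm1 hterm2
        _ = (θc (m+1) * KK m) ^ (q-1) * (α + β) := by ring
        _ ≤ (θc (m+1) * KK m) ^ (q-1) * KK m := by
            apply mul_le_mul_of_nonneg_left _ (Real.rpow_nonneg (by positivity) _)
            simp only [hα, hβ, hKK, hSdef]
            linarith
  -- Bd tendsto S
  have hKtendsto : Tendsto KK atTop (𝓝 S) := by
    have h5 := (tendsto_const_nhds (x := S) (f := atTop)).add (σ_tendsto.const_mul (3:ℝ))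
    rw [mul_zero, add_zero] at h5
    exact h5
  have hBdtendsto : Tendsto Bd atTop (𝓝 S) := by
    have hPK : Tendsto (fun m => θc (m+1) * KK m) atTop (𝓝 (1 * S)) :=
      θc_tendsto.mul hKtendsto
    rw [one_mul] at hPK
    have h1 : Tendsto (fun m => (θc (m+1) * KK m) ^ (q-1) * KK m) atTop
        (𝓝 (S ^ (q-1) * S)) :=
      (hPK.rpow_const (Or.inr (by linarith))).mul hKtendsto
    have h2 := h1.rpow_const (Or.inr (by positivity : (0:ℝ) ≤ 1/q))
    have h3 : (S ^ (q-1) * S) ^ (1/q) = S := by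
      rcases eq_or_lt_of_le hS0 with h | h
      · rw [← h, mul_zero, Real.zero_rpow (by positivity)]
      · rw [← Real.rpow_add_one h.ne' (q-1), sub_add_cancel, one_div,
          Real.rpow_rpow_inv hS0 hq0.ne']
    rw [h3] at h2
    exact h2
  have hfinal : Vq G q f0 f2 ≤ S := ge_of_tendsto hBdtendsto (Eventually.of_forall hbound)
  calc Vq G q f0 f2 ≤ S := hfinal
    _ = A + B := rfl
    _ ≤ (Vq G q f0 f1 + ε/2) + (Vq G q f1 f2 + ε/2) := add_le_add hc1lt.le hc2lt.le
    _ = Vq G q f0 f1 + Vq G q f1 f2 + ε := by ring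

end AuxTriangle
/-- `V_q` is a metric on probability distributions on `V`. -/
theorem statement15 {V E : Type*} [Fintype V] [Fintype E] [DecidableEq V]
    (G : DiGraph V E) (hconn : G.toSimpleGraph.Connected)
    (q : ℝ) (hq : 1 ≤ q) :
    ∀ f0 f1 f2 : V → ℝ, IsProbDist f0 → IsProbDist f1 → IsProbDist f2 →
      (0 ≤ Vq G q f0 f1) ∧
      (Vq G q f0 f1 = 0 ↔ f0 = f1) ∧
      (Vq G q f0 f1 = Vq G q f1 f0) ∧
      (Vq G q f0 f2 ≤ Vq G q f0 f1 + Vq G q f1 f2) := by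
  intro f0 f1 f2 h0 h1 h2
  rcases isEmpty_or_nonempty E with hE | hE
  · have hVs := subsingleton_of_no_edges hconn hE
    refine ⟨by rw [Vq_of_no_edges hE], ?_, ?_, ?_⟩
    · constructor
      · intro _
        exact prob_eq_of_subsingleton hVs h0 h1
      · intro _
        exact Vq_of_no_edges hE q f0 f1
    · rw [Vq_of_no_edges hE, Vq_of_no_edges hE]
    · rw [Vq_of_no_edges hE, Vq_of_no_edges hE, Vq_of_no_edges hE]
      norm_num
  · refine ⟨Vq_nonneg hq f0 f1, ?_, Vq_symm q f0 f1, Vq_triangle hq hconn hE h0 h1 h2⟩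
    constructor
    · intro hzero
      have hb : ∀ x, |f1 x - f0 x| ≤ Vq G q f0 f1 := by
        intro x
        apply le_csInf
        · obtain ⟨sol, hs0, hs1⟩ := exists_sol hconn h0 h1 hE
          exact ⟨Iq q sol.v sol.g, sol, hs0, hs1, rfl⟩
        · rintro b ⟨sol, hb0, hb1, rfl⟩
          have := abs_le_Iq hq sol x
          rwa [hb0, hb1] at this
      funext x
      have hx := hb x
      rw [hzero] at hx
      have := abs_nonpos_iff.1 hx
      linarith [sub_eq_zero.1 this]
    · intro heq
      subst heq
      exact Vq_self hq hE h0
end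

section
/- Let n ∈ ℕ and 0 ≤ p ≤ q ≤ 1. The Wasserstein-1 distance, with cost |x−y|, between the binomial distributions Bin(n,p) and Bin(n,q) on {0,1,…,n} equals n(q − p). -/
open scoped BigOperators
open Set

/-- The binomial distribution `Bin(n,p)` on `{0, 1, …, n}`. -/
noncomputable def binom (n : ℕ) (p : ℝ) (x : Fin (n + 1)) : ℝ :=
  (n.choose (x : ℕ) : ℝ) * p ^ (x : ℕ) * (1 - p) ^ (n - (x : ℕ))

private lemma binom_thm (m : ℕ) (a b : ℝ) :
    ∑ k ∈ Finset.range (m + 1), (m.choose k : ℝ) * a ^ k * b ^ (m - k) = (a + b) ^ m := by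
  rw [add_pow]
  exact Finset.sum_congr rfl fun k _ => by ring

private lemma binom_mean (n : ℕ) (p : ℝ) :
    ∑ x ∈ Finset.range (n + 1), (x : ℝ) * ((n.choose x : ℝ) * p ^ x * (1 - p) ^ (n - x))
      = n * p := by
  cases n with
  | zero => simp
  | succ m =>
    rw [Finset.sum_range_succ']
    simp only [Nat.cast_zero, zero_mul, add_zero]
    have key : ∀ k : ℕ, ((k : ℝ) + 1) * (((m + 1).choose (k + 1) : ℝ) * p ^ (k + 1) *
        (1 - p) ^ (m - k))
        = ((m : ℝ) + 1) * p * ((m.choose k : ℝ) * p ^ k * (1 - p) ^ (m - k)) := by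
      intro k
      have h : (m + 1) * m.choose k = (m + 1).choose (k + 1) * (k + 1) :=
        Nat.add_one_mul_choose_eq m k
      have h' : ((m : ℝ) + 1) * (m.choose k : ℝ) = ((m + 1).choose (k + 1) : ℝ) * ((k : ℝ) + 1) := by
        exact_mod_cast h
      linear_combination -(p ^ (k + 1) * (1 - p) ^ (m - k)) * h'
    calc ∑ k ∈ Finset.range (m + 1), ((k + 1 : ℕ) : ℝ) * (((m + 1).choose (k + 1) : ℝ) *
            p ^ (k + 1) * (1 - p) ^ (m + 1 - (k + 1)))
        = ∑ k ∈ Finset.range (m + 1),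
            ((m : ℝ) + 1) * p * ((m.choose k : ℝ) * p ^ k * (1 - p) ^ (m - k)) := by
          refine Finset.sum_congr rfl fun k _ => ?_
          push_cast
          exact key k
      _ = ((m : ℝ) + 1) * p * ((p + (1 - p)) ^ m) := by
          rw [← Finset.mul_sum, binom_thm]
      _ = ((m + 1 : ℕ) : ℝ) * p := by push_cast; ring_nf

private noncomputable def cpl (n : ℕ) (p q : ℝ) (x y : ℕ) : ℝ :=
  if x ≤ y then
    (n.choose y : ℝ) * (y.choose x : ℝ) * p ^ x * (q - p) ^ (y - x) * (1 - q) ^ (n - y)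
  else 0

private lemma cpl_nonneg (n : ℕ) (p q : ℝ) (hp : 0 ≤ p) (hpq : p ≤ q) (hq : q ≤ 1)
    (x y : ℕ) : 0 ≤ cpl n p q x y := by
  unfold cpl
  split
  · have h1 : (0:ℝ) ≤ q - p := by linarith
    have h2 : (0:ℝ) ≤ 1 - q := by linarith
    positivity
  · exact le_refl _

private lemma cpl_row (n : ℕ) (p q : ℝ) (x : ℕ) (hx : x ≤ n) :
    ∑ y ∈ Finset.range (n + 1), cpl n p q x y
      = (n.choose x : ℝ) * p ^ x * (1 - p) ^ (n - x) := by
  have hfil : (Finset.range (n + 1)).filter (fun y => x ≤ y) = Finset.Ico x (n + 1) := by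
    ext y
    simp only [Finset.mem_filter, Finset.mem_Ico, Finset.mem_range]
    omega
  unfold cpl
  rw [← Finset.sum_filter, hfil, Finset.sum_Ico_eq_sum_range,
      show n + 1 - x = (n - x) + 1 by omega]
  have hcong : ∀ k ∈ Finset.range (n - x + 1),
      (n.choose (x + k) : ℝ) * ((x + k).choose x : ℝ) * p ^ x * (q - p) ^ (x + k - x) *
        (1 - q) ^ (n - (x + k))
      = (n.choose x : ℝ) * p ^ x *
          (((n - x).choose k : ℝ) * (q - p) ^ k * (1 - q) ^ ((n - x) - k)) := by
    intro k hk
    have hk' : k ≤ n - x := by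
      have := Finset.mem_range.mp hk; omega
    have h1 : n.choose (x + k) * (x + k).choose x = n.choose x * (n - x).choose k := by
      have h := Nat.choose_mul (n := n) (show x ≤ x + k by omega)
      simpa using h
    have h1' : (n.choose (x + k) : ℝ) * ((x + k).choose x : ℝ)
        = (n.choose x : ℝ) * ((n - x).choose k : ℝ) := by exact_mod_cast h1
    rw [show x + k - x = k by omega, show n - (x + k) = (n - x) - k by omega]
    linear_combination (p ^ x * (q - p) ^ k * (1 - q) ^ ((n - x) - k)) * h1'
  rw [Finset.sum_congr rfl hcong, ← Finset.mul_sum, binom_thm,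
      show q - p + (1 - q) = 1 - p by ring]

private lemma cpl_col (n : ℕ) (p q : ℝ) (y : ℕ) (hy : y ≤ n) :
    ∑ x ∈ Finset.range (n + 1), cpl n p q x y
      = (n.choose y : ℝ) * q ^ y * (1 - q) ^ (n - y) := by
  have hsub : Finset.range (y + 1) ⊆ Finset.range (n + 1) := Finset.range_subset_range.2 (by omega)
  have hzero : ∀ x ∈ Finset.range (n + 1), x ∉ Finset.range (y + 1) → cpl n p q x y = 0 := by
    intro x _ hx
    have : ¬ x ≤ y := by
      simp only [Finset.mem_range] at hx; omega
    unfold cpl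
    rw [if_neg this]
  rw [← Finset.sum_subset hsub hzero]
  have hcong : ∀ x ∈ Finset.range (y + 1), cpl n p q x y
      = (n.choose y : ℝ) * (1 - q) ^ (n - y) * ((y.choose x : ℝ) * p ^ x * (q - p) ^ (y - x)) := by
    intro x hx
    have hxy : x ≤ y := by
      have := Finset.mem_range.mp hx; omega
    unfold cpl
    rw [if_pos hxy]; ring
  rw [Finset.sum_congr rfl hcong, ← Finset.mul_sum, binom_thm,
      show p + (q - p) = q by ring]
  ring

private lemma mean_fin (n : ℕ) (p : ℝ) :
    ∑ x : Fin (n + 1), ((x : ℕ) : ℝ) * binom n p x = n * p := by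
  simp only [binom]
  rw [Fin.sum_univ_eq_sum_range
      (fun i => (i : ℝ) * ((n.choose i : ℝ) * p ^ i * (1 - p) ^ (n - i)))]
  exact binom_mean n p

private lemma shift (n : ℕ) (p q : ℝ) (π : Fin (n + 1) → Fin (n + 1) → ℝ)
    (hr : ∀ x, ∑ y, π x y = binom n p x) (hc : ∀ y, ∑ x, π x y = binom n q y) :
    ∑ x : Fin (n + 1), ∑ y : Fin (n + 1), (((y : ℕ) : ℝ) - ((x : ℕ) : ℝ)) * π x y
      = n * (q - p) := by
  have h1 : ∑ x : Fin (n + 1), ∑ y : Fin (n + 1), ((y : ℕ) : ℝ) * π x y = n * q := by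
    rw [Finset.sum_comm]
    calc ∑ y : Fin (n + 1), ∑ x : Fin (n + 1), ((y : ℕ) : ℝ) * π x y
        = ∑ y : Fin (n + 1), ((y : ℕ) : ℝ) * binom n q y := by
          refine Finset.sum_congr rfl fun y _ => ?_
          rw [← Finset.mul_sum, hc]
      _ = n * q := mean_fin n q
  have h2 : ∑ x : Fin (n + 1), ∑ y : Fin (n + 1), ((x : ℕ) : ℝ) * π x y = n * p := by
    calc ∑ x : Fin (n + 1), ∑ y : Fin (n + 1), ((x : ℕ) : ℝ) * π x y
        = ∑ x : Fin (n + 1), ((x : ℕ) : ℝ) * binom n p x := by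
          refine Finset.sum_congr rfl fun x _ => ?_
          rw [← Finset.mul_sum, hr]
      _ = n * p := mean_fin n p
  have hsplit : ∑ x : Fin (n + 1), ∑ y : Fin (n + 1), (((y : ℕ) : ℝ) - ((x : ℕ) : ℝ)) * π x y
      = (∑ x : Fin (n + 1), ∑ y : Fin (n + 1), ((y : ℕ) : ℝ) * π x y)
        - ∑ x : Fin (n + 1), ∑ y : Fin (n + 1), ((x : ℕ) : ℝ) * π x y := by
    rw [← Finset.sum_sub_distrib]
    refine Finset.sum_congr rfl fun x _ => ?_
    rw [← Finset.sum_sub_distrib]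
    exact Finset.sum_congr rfl fun y _ => by ring
  rw [hsplit, h1, h2]; ring

/-- `W1(Bin(n,p), Bin(n,q)) = n (q − p)` for `0 ≤ p ≤ q ≤ 1`,
with cost `|x − y|`. -/
theorem statement17 (n : ℕ) (p q : ℝ) (hp : 0 ≤ p) (hpq : p ≤ q) (hq : q ≤ 1) :
    sInf {c : ℝ | ∃ π : Fin (n + 1) → Fin (n + 1) → ℝ,
      (∀ x y, 0 ≤ π x y) ∧
      (∀ x : Fin (n + 1), ∑ y : Fin (n + 1), π x y = binom n p x) ∧
      (∀ y : Fin (n + 1), ∑ x : Fin (n + 1), π x y = binom n q y) ∧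
      c = ∑ x : Fin (n + 1), ∑ y : Fin (n + 1),
            |((x : ℕ) : ℝ) - ((y : ℕ) : ℝ)| * π x y} = n * (q - p) := by
  have hπn : ∀ x y : Fin (n + 1), 0 ≤ cpl n p q (x : ℕ) (y : ℕ) :=
    fun x y => cpl_nonneg n p q hp hpq hq _ _
  have hr : ∀ x : Fin (n + 1), ∑ y : Fin (n + 1), cpl n p q (x : ℕ) (y : ℕ) = binom n p x := by
    intro x
    rw [Fin.sum_univ_eq_sum_range (fun i => cpl n p q (x : ℕ) i),
        cpl_row n p q x (Nat.lt_succ_iff.mp x.isLt)]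
    rfl
  have hc : ∀ y : Fin (n + 1), ∑ x : Fin (n + 1), cpl n p q (x : ℕ) (y : ℕ) = binom n q y := by
    intro y
    rw [Fin.sum_univ_eq_sum_range (fun i => cpl n p q i (y : ℕ)),
        cpl_col n p q y (Nat.lt_succ_iff.mp y.isLt)]
    rfl
  have habs : ∀ x y : Fin (n + 1),
      |((x : ℕ) : ℝ) - ((y : ℕ) : ℝ)| * cpl n p q (x : ℕ) (y : ℕ)
        = (((y : ℕ) : ℝ) - ((x : ℕ) : ℝ)) * cpl n p q (x : ℕ) (y : ℕ) := by
    intro x y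
    by_cases h : (x : ℕ) ≤ (y : ℕ)
    · have h' : ((x : ℕ) : ℝ) ≤ ((y : ℕ) : ℝ) := by exact_mod_cast h
      rw [abs_sub_comm, abs_of_nonneg (by linarith)]
    · have h0 : cpl n p q (x : ℕ) (y : ℕ) = 0 := by unfold cpl; rw [if_neg h]
      rw [h0]; ring
  have hcost : ∑ x : Fin (n + 1), ∑ y : Fin (n + 1),
      |((x : ℕ) : ℝ) - ((y : ℕ) : ℝ)| * cpl n p q (x : ℕ) (y : ℕ) = n * (q - p) := by
    rw [show (∑ x : Fin (n + 1), ∑ y : Fin (n + 1),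
          |((x : ℕ) : ℝ) - ((y : ℕ) : ℝ)| * cpl n p q (x : ℕ) (y : ℕ))
        = ∑ x : Fin (n + 1), ∑ y : Fin (n + 1),
            (((y : ℕ) : ℝ) - ((x : ℕ) : ℝ)) * cpl n p q (x : ℕ) (y : ℕ) from
      Finset.sum_congr rfl fun x _ => Finset.sum_congr rfl fun y _ => habs x y]
    exact shift n p q _ hr hc
  have hmem : (n : ℝ) * (q - p) ∈ {c : ℝ | ∃ π : Fin (n + 1) → Fin (n + 1) → ℝ,
      (∀ x y, 0 ≤ π x y) ∧
      (∀ x : Fin (n + 1), ∑ y : Fin (n + 1), π x y = binom n p x) ∧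
      (∀ y : Fin (n + 1), ∑ x : Fin (n + 1), π x y = binom n q y) ∧
      c = ∑ x : Fin (n + 1), ∑ y : Fin (n + 1),
            |((x : ℕ) : ℝ) - ((y : ℕ) : ℝ)| * π x y} :=
    ⟨fun x y => cpl n p q (x : ℕ) (y : ℕ), hπn, hr, hc, hcost.symm⟩
  have hlb : ∀ c ∈ {c : ℝ | ∃ π : Fin (n + 1) → Fin (n + 1) → ℝ,
      (∀ x y, 0 ≤ π x y) ∧
      (∀ x : Fin (n + 1), ∑ y : Fin (n + 1), π x y = binom n p x) ∧
      (∀ y : Fin (n + 1), ∑ x : Fin (n + 1), π x y = binom n q y) ∧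
      c = ∑ x : Fin (n + 1), ∑ y : Fin (n + 1),
            |((x : ℕ) : ℝ) - ((y : ℕ) : ℝ)| * π x y}, (n : ℝ) * (q - p) ≤ c := by
    rintro c ⟨π, hpos, hr', hc', rfl⟩
    rw [← shift n p q π hr' hc']
    refine Finset.sum_le_sum fun x _ => Finset.sum_le_sum fun y _ => ?_
    have h1 : ((y : ℕ) : ℝ) - ((x : ℕ) : ℝ) ≤ |((x : ℕ) : ℝ) - ((y : ℕ) : ℝ)| := by
      rw [abs_sub_comm]; exact le_abs_self _
    exact mul_le_mul_of_nonneg_right h1 (hpos x y)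
  exact le_antisymm (csInf_le ⟨_, hlb⟩ hmem) (le_csInf ⟨_, hmem⟩ hlb)
end

section
/- Let 0 ≤ λ ≤ μ. The Wasserstein-1 distance, with cost |x−y|, between the Poisson distributions Poi(λ) and Poi(μ) on ℕ equals μ − λ. -/
open scoped BigOperators
open Set
open scoped ENNReal NNReal

/-- The Poisson distribution on `ℕ` with parameter `l`. -/
noncomputable def poissonPMF (l : ℝ) (x : ℕ) : ℝ :=
  Real.exp (-l) * l ^ x / (Nat.factorial x : ℝ)

set_option linter.unusedVariables false

lemma poissonPMF_nonneg {l : ℝ} (hl : 0 ≤ l) (x : ℕ) : 0 ≤ poissonPMF l x := by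
  unfold poissonPMF; positivity

lemma poissonPMF_pos {l : ℝ} (hl : 0 < l) (x : ℕ) : 0 < poissonPMF l x := by
  unfold poissonPMF; positivity

lemma poissonPMF_hasSum {l : ℝ} (hl : 0 ≤ l) : HasSum (poissonPMF l) 1 := by
  have h : HasSum (fun n : ℕ => l ^ n / n.factorial) (Real.exp l) :=
    Real.exp_eq_exp_ℝ ▸ NormedSpace.expSeries_div_hasSum_exp l
  have h2 := h.mul_left (Real.exp (-l))
  have he : Real.exp (-l) * Real.exp l = 1 := by rw [← Real.exp_add]; simp
  rw [he] at h2
  refine h2.congr_fun fun n => ?_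
  unfold poissonPMF; ring

lemma poissonPMF_mean {l : ℝ} (hl : 0 ≤ l) :
    HasSum (fun n : ℕ => (n : ℝ) * poissonPMF l n) l := by
  have key : ∀ n : ℕ, ((n + 1 : ℕ) : ℝ) * poissonPMF l (n + 1) = l * poissonPMF l n := by
    intro n
    unfold poissonPMF
    rw [Nat.factorial_succ]
    have hf : (n.factorial : ℝ) ≠ 0 := by positivity
    push_cast
    field_simp
    ring
  have h2 := (poissonPMF_hasSum hl).mul_left l
  rw [mul_one] at h2
  have h1 : HasSum (fun n : ℕ => ((n + 1 : ℕ) : ℝ) * poissonPMF l (n + 1)) l :=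
    h2.congr_fun key
  have h3 := (hasSum_nat_add_iff (f := fun n : ℕ => (n : ℝ) * poissonPMF l n) 1).mp h1
  simpa using h3

lemma poisson_conv {a b : ℝ} (ha : 0 ≤ a) (hb : 0 ≤ b) (y : ℕ) :
    ∑ x ∈ Finset.range (y + 1), poissonPMF a x * poissonPMF b (y - x) = poissonPMF (a + b) y := by
  unfold poissonPMF
  rw [neg_add, Real.exp_add, add_pow]
  rw [Finset.mul_sum, Finset.sum_div]
  refine Finset.sum_congr rfl fun x hx => ?_
  have hxy : x ≤ y := Nat.lt_succ_iff.mp (Finset.mem_range.mp hx)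
  have hfac : (y.choose x : ℝ) * x.factorial * (y - x).factorial = y.factorial := by
    exact_mod_cast congrArg (Nat.cast : ℕ → ℝ) (Nat.choose_mul_factorial_mul_factorial hxy)
  have h1 : (x.factorial : ℝ) ≠ 0 := by positivity
  have h2 : ((y - x).factorial : ℝ) ≠ 0 := by positivity
  have h3 : (y.factorial : ℝ) ≠ 0 := by positivity
  field_simp
  rw [← hfac]; ring

noncomputable def couplingPi (lam d : ℝ) (x y : ℕ) : ℝ :=
  if x ≤ y then poissonPMF lam x * poissonPMF d (y - x) else 0

lemma couplingPi_nonneg {lam d : ℝ} (hl : 0 ≤ lam) (hd : 0 ≤ d) (x y : ℕ) :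
    0 ≤ couplingPi lam d x y := by
  unfold couplingPi
  split
  · exact mul_nonneg (poissonPMF_nonneg hl x) (poissonPMF_nonneg hd _)
  · exact le_refl 0

lemma coupling_row {lam d : ℝ} (hd : 0 ≤ d) (x : ℕ) :
    HasSum (fun y => couplingPi lam d x y) (poissonPMF lam x) := by
  have hinj : Function.Injective (fun n : ℕ => n + x) := fun a b h => by simpa using h
  have hzero : ∀ y ∉ Set.range (fun n : ℕ => n + x), couplingPi lam d x y = 0 := by
    intro y hy
    have hxy : ¬ x ≤ y := fun h => hy ⟨y - x, by dsimp; omega⟩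
    simp [couplingPi, hxy]
  rw [← hinj.hasSum_iff hzero]
  have heq : (fun y => couplingPi lam d x y) ∘ (fun n : ℕ => n + x)
      = fun n => poissonPMF lam x * poissonPMF d n := by
    funext n
    simp [couplingPi, Function.comp, Nat.le_add_left, Nat.add_sub_cancel]
  rw [heq]
  simpa using (poissonPMF_hasSum hd).mul_left (poissonPMF lam x)

lemma coupling_cost_row {lam d : ℝ} (hl : 0 ≤ lam) (hd : 0 ≤ d) (x : ℕ) :
    HasSum (fun y : ℕ => |(x : ℝ) - (y : ℝ)| * couplingPi lam d x y)
      (poissonPMF lam x * d) := by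
  have hinj : Function.Injective (fun n : ℕ => n + x) := fun a b h => by simpa using h
  have hzero : ∀ y ∉ Set.range (fun n : ℕ => n + x),
      |(x : ℝ) - (y : ℝ)| * couplingPi lam d x y = 0 := by
    intro y hy
    have hxy : ¬ x ≤ y := fun h => hy ⟨y - x, by dsimp; omega⟩
    simp [couplingPi, hxy]
  rw [← hinj.hasSum_iff hzero]
  have heq : (fun y : ℕ => |(x : ℝ) - (y : ℝ)| * couplingPi lam d x y) ∘ (fun n : ℕ => n + x)
      = fun n : ℕ => poissonPMF lam x * ((n : ℝ) * poissonPMF d n) := by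
    funext n
    have habs : |(x : ℝ) - ((n + x : ℕ) : ℝ)| = (n : ℝ) := by
      push_cast
      rw [abs_of_nonpos (by linarith [Nat.cast_nonneg (α := ℝ) n])]
      ring
    simp only [Function.comp, couplingPi, Nat.le_add_left, if_true, Nat.add_sub_cancel, habs]
    ring
  rw [heq]
  simpa using (poissonPMF_mean hd).mul_left (poissonPMF lam x)

lemma coupling_col {lam d : ℝ} (hl : 0 ≤ lam) (hd : 0 ≤ d) (y : ℕ) :
    ∑' x, couplingPi lam d x y = poissonPMF (lam + d) y := by
  rw [tsum_eq_sum (s := Finset.range (y + 1)) (fun x hx => by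
    have : ¬ x ≤ y := by simp at hx; omega
    simp [couplingPi, this])]
  rw [← poisson_conv hl hd y]
  refine Finset.sum_congr rfl fun x hx => ?_
  have : x ≤ y := by simp at hx; omega
  simp [couplingPi, this]

lemma ennreal_poisson_mean {l : ℝ} (hl : 0 ≤ l) :
    ∑' n : ℕ, (n : ℝ≥0∞) * ENNReal.ofReal (poissonPMF l n) = ENNReal.ofReal l := by
  have h : ∀ n : ℕ, (n : ℝ≥0∞) * ENNReal.ofReal (poissonPMF l n)
      = ENNReal.ofReal ((n : ℝ) * poissonPMF l n) := by
    intro n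
    rw [ENNReal.ofReal_mul (Nat.cast_nonneg n), ENNReal.ofReal_natCast]
  simp_rw [h]
  rw [← ENNReal.ofReal_tsum_of_nonneg
      (fun n => mul_nonneg (Nat.cast_nonneg n) (poissonPMF_nonneg hl n))
      (poissonPMF_mean hl).summable, (poissonPMF_mean hl).tsum_eq]

lemma lower_bound {lam mu : ℝ} (hlam : 0 ≤ lam) (hle : lam ≤ mu) (hmu : 0 < mu)
    (π : ℕ → ℕ → ℝ) (hpos : ∀ x y, 0 ≤ π x y)
    (hrow : ∀ x, ∑' y, π x y = poissonPMF lam x)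
    (hcol : ∀ y, ∑' x, π x y = poissonPMF mu y) :
    mu - lam ≤ ∑' (x : ℕ), ∑' (y : ℕ), |(x : ℝ) - (y : ℝ)| * π x y := by
  set P : ℕ → ℕ → ℝ≥0∞ := fun x y => ENNReal.ofReal (π x y) with hP
  have hcolsum : ∀ y, Summable fun x => π x y := by
    intro y
    by_contra h
    have h0 := tsum_eq_zero_of_not_summable h
    rw [hcol y] at h0
    exact absurd h0 (ne_of_gt (poissonPMF_pos hmu y))
  have hPcol : ∀ y, ∑' x, P x y = ENNReal.ofReal (poissonPMF mu y) := by
    intro y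
    rw [← ENNReal.ofReal_tsum_of_nonneg (fun x => hpos x y) (hcolsum y), hcol y]
  have htot : ∑' (x : ℕ), ∑' (y : ℕ), P x y = 1 := by
    rw [ENNReal.tsum_comm]
    simp_rw [hPcol]
    rw [← ENNReal.ofReal_tsum_of_nonneg (poissonPMF_nonneg hmu.le)
      (poissonPMF_hasSum hmu.le).summable, (poissonPMF_hasSum hmu.le).tsum_eq]
    simp
  have hrowfin : ∀ x, ∑' y, P x y ≠ ⊤ := by
    intro x
    refine ne_top_of_le_ne_top ?_ (ENNReal.le_tsum (f := fun x => ∑' y, P x y) x)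
    rw [htot]; exact ENNReal.one_ne_top
  have hrowsum : ∀ x, Summable (π x) := by
    intro x
    exact (ENNReal.summable_toReal (hrowfin x)).congr
      fun y => ENNReal.toReal_ofReal (hpos x y)
  have hProw : ∀ x, ∑' y, P x y = ENNReal.ofReal (poissonPMF lam x) := by
    intro x
    rw [← ENNReal.ofReal_tsum_of_nonneg (fun y => hpos x y) (hrowsum x), hrow x]
  have hSy : ∑' (x : ℕ), ∑' (y : ℕ), (y : ℝ≥0∞) * P x y = ENNReal.ofReal mu := by
    rw [ENNReal.tsum_comm]
    simp_rw [ENNReal.tsum_mul_left, hPcol]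
    exact ennreal_poisson_mean hmu.le
  have hSx : ∑' (x : ℕ), ∑' (y : ℕ), (x : ℝ≥0∞) * P x y = ENNReal.ofReal lam := by
    simp_rw [ENNReal.tsum_mul_left, hProw]
    exact ennreal_poisson_mean hlam
  set T : ℝ≥0∞ := ∑' (x : ℕ), ∑' (y : ℕ), ENNReal.ofReal |(x : ℝ) - (y : ℝ)| * P x y with hT
  have hTle : T ≤ ENNReal.ofReal lam + ENNReal.ofReal mu := by
    calc T ≤ ∑' (x : ℕ), ∑' (y : ℕ), ((x : ℝ≥0∞) * P x y + (y : ℝ≥0∞) * P x y) := by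
          refine ENNReal.tsum_le_tsum fun x => ENNReal.tsum_le_tsum fun y => ?_
          rw [← add_mul]
          refine mul_le_mul_left ?_ _
          calc ENNReal.ofReal |(x : ℝ) - (y : ℝ)|
              ≤ ENNReal.ofReal ((x : ℝ) + (y : ℝ)) := by
                refine ENNReal.ofReal_le_ofReal ?_
                have h1 : (0:ℝ) ≤ (x:ℝ) := Nat.cast_nonneg x
                have h2 : (0:ℝ) ≤ (y:ℝ) := Nat.cast_nonneg y
                exact abs_le.mpr ⟨by linarith, by linarith⟩
            _ = (x : ℝ≥0∞) + (y : ℝ≥0∞) := by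
                rw [ENNReal.ofReal_add (Nat.cast_nonneg x) (Nat.cast_nonneg y),
                  ENNReal.ofReal_natCast, ENNReal.ofReal_natCast]
      _ = ENNReal.ofReal lam + ENNReal.ofReal mu := by
          simp_rw [ENNReal.tsum_add]
          rw [hSx, hSy]
  have hTne : T ≠ ⊤ := ne_top_of_le_ne_top (by simp) hTle
  have hkey : ENNReal.ofReal mu ≤ ENNReal.ofReal lam + T := by
    rw [← hSy]
    calc ∑' (x : ℕ), ∑' (y : ℕ), (y : ℝ≥0∞) * P x y
        ≤ ∑' (x : ℕ), ∑' (y : ℕ),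
            ((x : ℝ≥0∞) * P x y + ENNReal.ofReal |(x : ℝ) - (y : ℝ)| * P x y) := by
          refine ENNReal.tsum_le_tsum fun x => ENNReal.tsum_le_tsum fun y => ?_
          rw [← add_mul]
          refine mul_le_mul_left ?_ _
          calc (y : ℝ≥0∞) = ENNReal.ofReal ((y : ℝ)) := (ENNReal.ofReal_natCast y).symm
            _ ≤ ENNReal.ofReal ((x : ℝ) + |(x : ℝ) - (y : ℝ)|) := by
                refine ENNReal.ofReal_le_ofReal ?_
                have := neg_abs_le ((x : ℝ) - (y : ℝ))
                linarith
            _ = (x : ℝ≥0∞) + ENNReal.ofReal |(x : ℝ) - (y : ℝ)| := by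
                rw [ENNReal.ofReal_add (Nat.cast_nonneg x) (abs_nonneg _),
                  ENNReal.ofReal_natCast]
      _ = ENNReal.ofReal lam + T := by
          simp_rw [ENNReal.tsum_add]
          rw [hSx]
  have hTge : ENNReal.ofReal (mu - lam) ≤ T := by
    rw [ENNReal.ofReal_sub mu hlam]
    rw [add_comm] at hkey
    exact tsub_le_iff_right.mpr hkey
  have hTx : ∀ x : ℕ, (∑' (y : ℕ), ENNReal.ofReal |(x : ℝ) - (y : ℝ)| * P x y) ≠ ⊤ := by
    intro x
    exact ne_top_of_le_ne_top hTne
      (ENNReal.le_tsum (f := fun x : ℕ => ∑' (y : ℕ), ENNReal.ofReal |(x : ℝ) - (y : ℝ)| * P x y) x)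
  have hcalc : ∑' (x : ℕ), ∑' (y : ℕ), |(x : ℝ) - (y : ℝ)| * π x y = T.toReal := by
    rw [ENNReal.tsum_toReal_eq hTx]
    refine tsum_congr fun x => ?_
    rw [ENNReal.tsum_toReal_eq (fun y => ENNReal.mul_ne_top ENNReal.ofReal_ne_top
      ENNReal.ofReal_ne_top)]
    refine tsum_congr fun y => ?_
    rw [ENNReal.toReal_mul, ENNReal.toReal_ofReal (abs_nonneg _),
      ENNReal.toReal_ofReal (hpos x y)]
  rw [hcalc]
  calc mu - lam = (ENNReal.ofReal (mu - lam)).toReal :=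
        (ENNReal.toReal_ofReal (by linarith)).symm
    _ ≤ T.toReal := ENNReal.toReal_mono hTne hTge


/-- `W1(Poi(λ), Poi(μ)) = μ − λ` for `0 ≤ λ ≤ μ`,
with cost `|x − y|`. -/
theorem statement18 (lam mu : ℝ) (hlam : 0 ≤ lam) (hle : lam ≤ mu) :
    sInf {c : ℝ | ∃ π : ℕ → ℕ → ℝ,
      (∀ x y, 0 ≤ π x y) ∧
      (∀ x, ∑' y, π x y = poissonPMF lam x) ∧
      (∀ y, ∑' x, π x y = poissonPMF mu y) ∧
      c = ∑' (x : ℕ), ∑' (y : ℕ), |(x : ℝ) - (y : ℝ)| * π x y} = mu - lam := by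
  have hd : (0:ℝ) ≤ mu - lam := by linarith
  have hmem : (mu - lam) ∈ {c : ℝ | ∃ π : ℕ → ℕ → ℝ,
      (∀ x y, 0 ≤ π x y) ∧
      (∀ x, ∑' y, π x y = poissonPMF lam x) ∧
      (∀ y, ∑' x, π x y = poissonPMF mu y) ∧
      c = ∑' (x : ℕ), ∑' (y : ℕ), |(x : ℝ) - (y : ℝ)| * π x y} := by
    refine ⟨couplingPi lam (mu - lam), fun x y => couplingPi_nonneg hlam hd x y,
      fun x => (coupling_row hd x).tsum_eq, fun y => ?_, ?_⟩
    · rw [coupling_col hlam hd y]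
      congr 1
      ring
    · have hcost : ∀ x : ℕ, ∑' (y : ℕ), |(x : ℝ) - (y : ℝ)| * couplingPi lam (mu - lam) x y
          = poissonPMF lam x * (mu - lam) :=
        fun x => (coupling_cost_row hlam hd x).tsum_eq
      have houter := (poissonPMF_hasSum hlam).mul_right (mu - lam)
      rw [one_mul] at houter
      rw [tsum_congr hcost, houter.tsum_eq]
  have hbdd : BddBelow {c : ℝ | ∃ π : ℕ → ℕ → ℝ,
      (∀ x y, 0 ≤ π x y) ∧
      (∀ x, ∑' y, π x y = poissonPMF lam x) ∧
      (∀ y, ∑' x, π x y = poissonPMF mu y) ∧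
      c = ∑' (x : ℕ), ∑' (y : ℕ), |(x : ℝ) - (y : ℝ)| * π x y} := by
    refine ⟨0, fun c hc => ?_⟩
    obtain ⟨π, hpos, -, -, hc⟩ := hc
    rw [hc]
    exact tsum_nonneg fun x => tsum_nonneg fun y => mul_nonneg (abs_nonneg _) (hpos x y)
  refine le_antisymm (csInf_le hbdd hmem) (le_csInf ⟨_, hmem⟩ ?_)
  rintro c ⟨π, hpos, hrow, hcol, hc⟩
  rcases eq_or_lt_of_le (hlam.trans hle) with hmu0 | hmu0
  · have hm0 : mu = 0 := hmu0.symm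
    have hl0 : lam = 0 := le_antisymm (by linarith) hlam
    rw [hc, hm0, hl0, sub_zero]
    exact tsum_nonneg fun x => tsum_nonneg fun y => mul_nonneg (abs_nonneg _) (hpos x y)
  · rw [hc]
    exact lower_bound hlam hle hmu0 π hpos hrow hcol
end
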